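/- arXiv:1512.01379 — 2 statements merged into one kernel-verified Lean document; each statement's English description precedes it below -/
import Mathlib

section
/- There exists a constant C > 0 (depending only on λ > 0) such that for all k ∈ ℕ and all t > 0, 0 ≤ e^{-2t} · t^{-λ} · I_{λ+k}(2t) ≤ C / (k+1)^{2λ+1}, where I_ν is the modified Bessel function of the first kind. -/
open Real

/-- The modified Bessel function of the first kind of order `ν`. -/
noncomputable def besselI (ν : ℝ) (z : ℝ) : ℝ :=
  ∑' k : ℕ, (z / 2) ^ (ν + 2 * (k : ℝ)) / ((k.factorial : ℝ) * Real.Gamma (ν + k + 1))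

open Finset

set_option maxHeartbeats 1000000

-- fractional-step Gautschi via log-convexity
lemma gamma_frac (x f : ℝ) (hx : 1 ≤ x) (hf0 : 0 ≤ f) (hf1 : f < 1) :
    Real.Gamma x * x ^ f ≤ 2 * Real.Gamma (x + f) := by
  have hx0 : (0:ℝ) < x := lt_of_lt_of_le one_pos hx
  rcases eq_or_lt_of_le hf0 with hf | hf
  · subst hf
    simp [Real.rpow_zero]
    nlinarith [Real.Gamma_pos_of_pos hx0]
  · have hxf : (0:ℝ) < x + f := by linarith
    -- log-convexity: x+1 = f•(x+f) + (1-f)•(x+1+f)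
    have hconv := Real.convexOn_log_Gamma.2 (Set.mem_Ioi.2 hxf)
      (Set.mem_Ioi.2 (by linarith : (0:ℝ) < x + 1 + f)) 
      (le_of_lt hf : (0:ℝ) ≤ f) (by linarith : (0:ℝ) ≤ 1 - f)
      (by ring : f + (1 - f) = 1)
    have hcomb : f * (x + f) + (1 - f) * (x + 1 + f) = x + 1 := by ring
    simp only [smul_eq_mul] at hconv
    rw [hcomb] at hconv
    have hG1 : Real.Gamma (x + 1 + f) = (x + f) * Real.Gamma (x + f) := by
      have := Real.Gamma_add_one (ne_of_gt hxf)
      rw [← this]; ring_nf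
    have hGxf : 0 < Real.Gamma (x + f) := Real.Gamma_pos_of_pos hxf
    have hGx1 : 0 < Real.Gamma (x + 1) := Real.Gamma_pos_of_pos (by linarith)
    -- exponentiate
    have hlog : Real.log (Real.Gamma (x + 1)) ≤
        Real.log (Real.Gamma (x + f)) + (1 - f) * Real.log (x + f) := by
      have := hconv
      simp only [Function.comp_apply] at this
      rw [hG1, Real.log_mul (ne_of_gt hxf) (ne_of_gt hGxf)] at this
      linarith
    have hexp : Real.Gamma (x + 1) ≤ Real.Gamma (x + f) * (x + f) ^ (1 - f) := by
      have h2 := Real.exp_le_exp.2 hlog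
      rw [Real.exp_log hGx1, Real.exp_add, Real.exp_log hGxf] at h2
      rw [Real.rpow_def_of_pos hxf, mul_comm (Real.log (x+f))]
      linarith [h2]
    rw [Real.Gamma_add_one (ne_of_gt hx0)] at hexp
    -- (x+f)^(1-f) ≤ 2 * x^(1-f)
    have hb : (x + f) ^ (1 - f) ≤ 2 * x ^ (1 - f) := by
      have h1 : (x + f) ^ (1 - f) ≤ (2 * x) ^ (1 - f) :=
        Real.rpow_le_rpow (le_of_lt hxf) (by linarith) (by linarith)
      rw [Real.mul_rpow (by norm_num) (le_of_lt hx0)] at h1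
      have h2 : (2:ℝ) ^ (1 - f) ≤ 2 := by
        calc (2:ℝ) ^ (1 - f) ≤ (2:ℝ) ^ (1:ℝ) :=
          Real.rpow_le_rpow_of_exponent_le (by norm_num) (by linarith)
        _ = 2 := Real.rpow_one 2
      nlinarith [Real.rpow_nonneg (le_of_lt hx0) (1 - f)]
    -- combine:  x * Γ x ≤ Γ(x+f) * (x+f)^(1-f) ≤ 2 Γ(x+f) x^(1-f)
    -- so Γ x * x^f = x Γ x * x^(f-1) ≤ 2 Γ(x+f) x^(1-f) x^(f-1) = 2 Γ(x+f)
    have hxpow : x ^ f * x ^ (1 - f) = x := by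
      rw [← Real.rpow_add hx0]; norm_num
    have hGx : 0 < Real.Gamma x := Real.Gamma_pos_of_pos hx0
    have hxf1 : (0:ℝ) < x ^ (1 - f) := Real.rpow_pos_of_pos hx0 _
    nlinarith [Real.rpow_nonneg (le_of_lt hx0) f]

lemma gamma_lower_aux (n : ℕ) : ∀ d : ℝ, 0 ≤ d → d < n + 1 → ∀ x : ℝ, 1 ≤ x →
    Real.Gamma x * x ^ d ≤ 2 * Real.Gamma (x + d) := by
  induction n with
  | zero => intro d h0 h1 x hx; exact gamma_frac x d hx h0 (by push_cast at h1; linarith)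
  | succ n ih =>
    intro d h0 h1 x hx
    rcases lt_or_ge d ((n:ℝ) + 1) with h | h
    · exact ih d h0 h x hx
    · have hd1 : (1:ℝ) ≤ d := le_trans (by exact_mod_cast Nat.one_le_iff_ne_zero.2 (Nat.succ_ne_zero n) |>.trans (le_refl _) |>.trans_eq rfl; ) h
      have hx0 : (0:ℝ) < x := lt_of_lt_of_le one_pos hx
      have key := ih (d - 1) (by linarith) (by push_cast at h1 ⊢; linarith) x hx
      have hxd : x + (d - 1) ≠ 0 := by intro hc; nlinarith
      have hG : Real.Gamma (x + d) = (x + (d - 1)) * Real.Gamma (x + (d - 1)) := by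
        have := Real.Gamma_add_one hxd
        rw [← this]; ring_nf
      have hxpow : x ^ d = x ^ (d - 1) * x := by
        rw [← Real.rpow_add_one (ne_of_gt hx0)]; ring_nf
      have hGpos : 0 < Real.Gamma (x + (d - 1)) := Real.Gamma_pos_of_pos (by linarith)
      have hxp : 0 < x ^ (d-1) := Real.rpow_pos_of_pos hx0 _
      rw [hG, hxpow]
      nlinarith [Real.Gamma_pos_of_pos hx0]

lemma gamma_lower (d x : ℝ) (hd : 0 ≤ d) (hx : 1 ≤ x) :
    Real.Gamma x * x ^ d ≤ 2 * Real.Gamma (x + d) := by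
  obtain ⟨n, hn⟩ := exists_nat_gt d
  exact gamma_lower_aux n d hd (by linarith) x hx

lemma gamma_nat_lower (l : ℝ) (hl : 0 < l) (n : ℕ) :
    (n.factorial : ℝ) * ((n:ℝ) + 1) ^ l ≤ 2 * Real.Gamma (l + n + 1) := by
  have h := gamma_lower l ((n:ℝ)+1) (le_of_lt hl) (by exact_mod_cast Nat.le_add_left 1 n)
  rw [Real.Gamma_nat_eq_factorial] at h
  convert h using 3
  ring

lemma central_sq (n : ℕ) : (Nat.centralBinom n) ^ 2 * (2 * n + 1) ≤ 2 * 16 ^ n := by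
  induction n with
  | zero => simp [Nat.centralBinom]
  | succ n ih =>
    have h := Nat.succ_mul_centralBinom_succ n
    have h2 : ((n+1) * Nat.centralBinom (n+1))^2 * (2*(n+1)+1)
        ≤ (n+1)^2 * (2 * 16 ^ (n+1)) := by
      rw [h]
      have expand : (2 * (2*n+1) * Nat.centralBinom n)^2 * (2*(n+1)+1)
          = (Nat.centralBinom n ^ 2 * (2*n+1)) * (4 * (2*n+1) * (2*n+3)) := by ring
      rw [expand]
      calc (Nat.centralBinom n ^ 2 * (2*n+1)) * (4 * (2*n+1) * (2*n+3))
          ≤ (2 * 16^n) * (4 * (2*n+1) * (2*n+3)) := Nat.mul_le_mul_right _ ih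
        _ ≤ (2 * 16^n) * (4 * (2*n+2) * (2*n+2)) := by
            apply Nat.mul_le_mul_left
            nlinarith
        _ = (n+1)^2 * (2 * 16^(n+1)) := by ring
    have hpos : 0 < (n+1)^2 := by positivity
    refine Nat.le_of_mul_le_mul_left ?_ hpos
    calc (n+1)^2 * (Nat.centralBinom (n+1) ^2 * (2*(n+1)+1))
        = ((n+1) * Nat.centralBinom (n+1))^2 * (2*(n+1)+1) := by ring
      _ ≤ (n+1)^2 * (2 * 16^(n+1)) := h2

lemma middle_sq (m : ℕ) : (m.choose (m/2))^2 * (m+1) ≤ 2 * 4 ^ m := by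
  rcases Nat.even_or_odd m with ⟨n, hn⟩ | ⟨n, hn⟩
  · subst hn
    have h2 : (n + n) / 2 = n := by omega
    rw [h2]
    have := central_sq n
    rw [Nat.centralBinom] at this
    calc ((n+n).choose n)^2 * (n+n+1) = (2*n).choose n ^2 * (2*n+1) := by ring_nf
      _ ≤ 2 * 16^n := this
      _ = 2 * 4^(n+n) := by rw [show (16:ℕ) = 4^2 by norm_num, ← pow_mul]; ring_nf
  · subst hn
    have hdiv : (2*n + 1) / 2 = n := by omega
    rw [hdiv]
    have hdub : Nat.centralBinom (n+1) = 2 * ((2*n+1).choose n) := by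
      have h1 : Nat.centralBinom (n+1) = (2*n+1).choose n + (2*n+1).choose (n+1) := by
        rw [Nat.centralBinom]
        have : 2 * (n+1) = (2*n+1) + 1 := by ring
        rw [this, Nat.choose_succ_succ' (2*n+1) n]
      have h2 : (2*n+1).choose (n+1) = (2*n+1).choose n := by
        rw [← Nat.choose_symm (by omega : n + 1 ≤ 2*n+1)]
        congr 1; omega
      omega
    have hc := central_sq (n+1)
    rw [hdub] at hc
    have h3 : 4 * (((2*n+1).choose n)^2 * (2*n+1+1)) ≤ 4 * (2 * 4^(2*n+1)) := by
      calc 4 * (((2*n+1).choose n)^2 * (2*n+1+1))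
          = (2 * ((2*n+1).choose n))^2 * (2*(n+1)) := by ring
        _ ≤ (2 * ((2*n+1).choose n))^2 * (2*(n+1)+1) := by
            exact Nat.mul_le_mul_left _ (by omega)
        _ ≤ 2 * 16^(n+1) := hc
        _ = 4 * (2 * 4^(2*n+1)) := by
            rw [show (16:ℕ) = 4^2 by norm_num, ← pow_mul]
            ring_nf
    exact Nat.le_of_mul_le_mul_left h3 (by norm_num)

lemma sum_odds (d : ℕ) : ∑ s ∈ range d, (2*s+1) = d^2 := by
  induction d with
  | zero => simp
  | succ d ih => rw [Finset.sum_range_succ, ih]; ring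

lemma telescope (m c : ℕ) (hc : c = m/2) :
    ∀ d, d ≤ c → m.choose (c - d) * ∏ s ∈ range d, (c + s + 1)
      ≤ m.choose c * ∏ s ∈ range d, (c - s) := by
  intro d
  induction d with
  | zero => simp
  | succ d ih =>
    intro hd
    have hdc : d ≤ c := by omega
    have step : m.choose (c - (d+1)) * (c + d + 1) ≤ m.choose (c - d) * (c - d) := by
      have hk : c - d = (c - (d+1)) + 1 := by omega
      have hid := Nat.choose_succ_right_eq m (c - (d+1))
      rw [← hk] at hid
      -- hid : m.choose (c-d) * (c-d) = m.choose (c-(d+1)) * (m - (c-(d+1)))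
      have hbig : c + d + 1 ≤ m - (c - (d+1)) := by omega
      calc m.choose (c - (d+1)) * (c + d + 1)
          ≤ m.choose (c - (d+1)) * (m - (c - (d+1))) := Nat.mul_le_mul_left _ hbig
        _ = m.choose (c - d) * (c - d) := hid.symm
    calc m.choose (c - (d+1)) * ∏ s ∈ range (d+1), (c + s + 1)
        = (m.choose (c - (d+1)) * (c + d + 1)) * ∏ s ∈ range d, (c + s + 1) := by
          rw [Finset.prod_range_succ]; ring
      _ ≤ (m.choose (c - d) * (c - d)) * ∏ s ∈ range d, (c + s + 1) :=
          Nat.mul_le_mul_right _ step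
      _ = (c - d) * (m.choose (c - d) * ∏ s ∈ range d, (c + s + 1)) := by ring
      _ ≤ (c - d) * (m.choose c * ∏ s ∈ range d, (c - s)) :=
          Nat.mul_le_mul_left _ (ih hdc)
      _ = m.choose c * ∏ s ∈ range (d+1), (c - s) := by
          rw [Finset.prod_range_succ]; ring

lemma ratio_bound (m c d : ℕ) (hc : c = m/2) (hd : d ≤ c) (hm : 1 ≤ m) :
    (m.choose (c - d) : ℝ) ≤ (m.choose c : ℝ) * Real.exp (-(d:ℝ)^2 / m) := by
  have htel := telescope m c hc d hd
  have hcast : (m.choose (c - d) : ℝ) * ∏ s ∈ range d, ((c:ℝ) + s + 1)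
      ≤ (m.choose c : ℝ) * ∏ s ∈ range d, ((c:ℝ) - s) := by
    have := (Nat.cast_le (α := ℝ)).2 htel
    push_cast at this
    calc (m.choose (c - d) : ℝ) * ∏ s ∈ range d, ((c:ℝ) + s + 1)
        = ((m.choose (c - d) * ∏ s ∈ range d, (c + s + 1) : ℕ) : ℝ) := by push_cast; ring
      _ ≤ ((m.choose c * ∏ s ∈ range d, (c - s) : ℕ) : ℝ) := by exact_mod_cast htel
      _ = (m.choose c : ℝ) * ∏ s ∈ range d, (((c:ℕ) - (s:ℕ) : ℕ) : ℝ) := by push_cast; ring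
      _ ≤ (m.choose c : ℝ) * ∏ s ∈ range d, ((c:ℝ) - s) := by
          apply mul_le_mul_of_nonneg_left _ (by positivity)
          apply Finset.prod_le_prod (fun s _ => by positivity)
          intro s hs
          simp only [Finset.mem_range] at hs
          rw [Nat.cast_sub (by omega : s ≤ c)]
  -- divide by the positive product
  have hposP : (0:ℝ) < ∏ s ∈ range d, ((c:ℝ) + s + 1) := by
    apply Finset.prod_pos; intro s _; positivity
  -- ratio step: ∏ (c-s)/(c+s+1) ≤ exp(-d²/m)
  have hratio : ∏ s ∈ range d, (((c:ℝ) - s) / ((c:ℝ) + s + 1)) ≤ Real.exp (-(d:ℝ)^2 / m) := by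
    have hn : ∑ s ∈ range d, (2*(s:ℝ)+1) = (d:ℝ)^2 := by
      have h := sum_odds d
      calc ∑ s ∈ range d, (2*(s:ℝ)+1) = ((∑ s ∈ range d, (2*s+1) : ℕ) : ℝ) := by
            push_cast; ring
        _ = (d:ℝ)^2 := by rw [h]; push_cast; ring
    have hsum : ∑ s ∈ range d, (-(2*(s:ℝ)+1) / m) = -(d:ℝ)^2 / m := by
      rw [← Finset.sum_div]
      congr 1
      rw [← hn, ← Finset.sum_neg_distrib]
    rw [← hsum, Real.exp_sum]
    apply Finset.prod_le_prod
    · intro s hs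
      have hsc : s ≤ c := by simp at hs; omega
      have : (0:ℝ) ≤ (c:ℝ) - s := by
        have : (s:ℝ) ≤ c := by exact_mod_cast hsc
        linarith
      positivity
    · intro s hs
      simp only [Finset.mem_range] at hs
      have h1 : ((c:ℝ) - s) / ((c:ℝ) + s + 1) = 1 - (2*(s:ℝ)+1)/((c:ℝ)+s+1) := by
        field_simp
        ring
      rw [h1]
      have h2 : (1:ℝ) - (2*(s:ℝ)+1)/((c:ℝ)+s+1) ≤ Real.exp (-((2*(s:ℝ)+1)/((c:ℝ)+s+1))) := by
        have := Real.add_one_le_exp (-((2*(s:ℝ)+1)/((c:ℝ)+s+1)))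
        linarith
      refine le_trans h2 (Real.exp_le_exp.2 ?_)
      -- -(x)/(c+s+1) ≤ -(x)/m  since c+s+1 ≤ m
      have hcm : (c:ℝ) + s + 1 ≤ m := by
        have : c + s + 1 ≤ m := by omega
        exact_mod_cast this
      have hx : (0:ℝ) < 2*(s:ℝ)+1 := by positivity
      rw [neg_div, neg_le_neg_iff]
      apply div_le_div_of_nonneg_left (le_of_lt hx) (by positivity)
      · exact hcm
  -- combine
  have h2 : (m.choose (c - d) : ℝ) ≤ (m.choose c : ℝ) * ∏ s ∈ range d, (((c:ℝ) - s) / ((c:ℝ) + s + 1)) := by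
    rw [Finset.prod_div_distrib, ← mul_div_assoc, le_div_iff₀ hposP]
    exact hcast
  calc (m.choose (c - d) : ℝ) ≤ _ := h2
    _ ≤ (m.choose c : ℝ) * Real.exp (-(d:ℝ)^2 / m) :=
        mul_le_mul_of_nonneg_left hratio (by positivity)

lemma exp_poly' (u q : ℝ) (hu : 0 < u) (hq : 0 < q) :
    u ^ q ≤ q ^ q * Real.exp u := by
  have hlog : Real.log (u / q) ≤ u / q - 1 := Real.log_le_sub_one_of_pos (by positivity)
  have h1 : q * Real.log u ≤ q * Real.log q + u := by
    rw [Real.log_div (ne_of_gt hu) (ne_of_gt hq)] at hlog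
    have := mul_le_mul_of_nonneg_left hlog (le_of_lt hq)
    have h2 : q * (u / q - 1) = u - q := by field_simp
    nlinarith
  calc u ^ q = Real.exp (q * Real.log u) := by
        rw [Real.rpow_def_of_pos hu, mul_comm]
    _ ≤ Real.exp (q * Real.log q + u) := Real.exp_le_exp.2 h1
    _ = q ^ q * Real.exp u := by
        rw [Real.exp_add, Real.rpow_def_of_pos hq, mul_comm (Real.log q)]

-- choose * sqrt(m+1) ≤ 2 * 2^m  (from middle_sq)
lemma choose_sqrt (m j : ℕ) : (m.choose j : ℝ) * Real.sqrt (m+1) ≤ 2 * 2 ^ m := by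
  have h1 : (m.choose j : ℝ) ≤ (m.choose (m/2) : ℝ) := by
    exact_mod_cast Nat.choose_le_middle j m
  have h2 : ((m.choose (m/2))^2 * (m+1) : ℝ) ≤ 2 * 4 ^ m := by
    exact_mod_cast middle_sq m
  have hs : (0:ℝ) ≤ Real.sqrt (m+1) := Real.sqrt_nonneg _
  have hsq : ((m.choose (m/2) : ℝ) * Real.sqrt (m+1))^2 ≤ (2 * 2^m)^2 := by
    have : ((m.choose (m/2) : ℝ) * Real.sqrt (m+1))^2 = (m.choose (m/2):ℝ)^2 * ((m+1):ℝ) := by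
      rw [mul_pow, Real.sq_sqrt (by positivity)]
    rw [this]
    calc ((m.choose (m/2)):ℝ)^2 * ((m:ℝ)+1) ≤ 2 * 4^m := by exact_mod_cast h2
      _ ≤ (2 * 2^m)^2 := by
          rw [show ((4:ℝ)) = 2^2 by norm_num, ← pow_mul]
          ring_nf
          rw [pow_mul]
          nlinarith [pow_pos (show (0:ℝ) < 2 by norm_num) m]
  have hmid : (m.choose (m/2) : ℝ) * Real.sqrt (m+1) ≤ 2 * 2^m := by
    nlinarith [mul_nonneg (Nat.cast_nonneg (m.choose (m/2))) hs,
      pow_pos (show (0:ℝ) < 2 by norm_num) m]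
  calc (m.choose j : ℝ) * Real.sqrt (m+1) ≤ (m.choose (m/2) : ℝ) * Real.sqrt (m+1) :=
      mul_le_mul_of_nonneg_right h1 hs
    _ ≤ 2 * 2^m := hmid

noncomputable def Cone (l : ℝ) : ℝ :=
  2 * (3:ℝ) ^ (2*l+1) + 2 ^ (2*l+2) + 2 * (l+1/2) ^ (l+1/2) * 16 ^ (l+1/2)

lemma key2 (l : ℝ) (hl : 0 < l) (k j : ℕ) :
    ((k+2*j).choose j : ℝ) * ((k:ℝ)+1) ^ (2*l+1) ≤
      Cone l * 2^(k+2*j) * (((k:ℝ)+2*j)+1) ^ l := by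
  have hq : (0:ℝ) < l + 1/2 := by linarith
  set q : ℝ := l + 1/2 with hqdef
  set m : ℕ := k + 2*j with hm
  set M : ℝ := (m:ℝ) + 1 with hM
  have hM1 : (1:ℝ) ≤ M := by rw [hM]; have : (0:ℝ) ≤ (m:ℝ) := Nat.cast_nonneg m; linarith
  have hM0 : (0:ℝ) < M := by linarith
  have hMeq : ((k:ℝ)+2*j)+1 = M := by rw [hM, hm]; push_cast; ring
  rw [hMeq]
  have hMl1 : (1:ℝ) ≤ M ^ l := Real.one_le_rpow hM1 (le_of_lt hl)
  have hMl0 : (0:ℝ) < M ^ l := lt_of_lt_of_le one_pos hMl1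
  have h2m : (0:ℝ) < 2^m := by positivity
  have hsqrtM : Real.sqrt M = M ^ ((1:ℝ)/2) := Real.sqrt_eq_rpow M
  have hsqrt_pos : (0:ℝ) < Real.sqrt M := Real.sqrt_pos.2 hM0
  have hchoose_sqrt : ((m.choose j):ℝ) * Real.sqrt M ≤ 2 * 2^m := by
    have := choose_sqrt m j
    rw [hM]; exact_mod_cast this
  have hk1 : (0:ℝ) < (k:ℝ) + 1 := by positivity
  have hCone1 : (0:ℝ) < 2 * (3:ℝ) ^ (2*l+1) := by positivity
  have hCone2 : (0:ℝ) < (2:ℝ) ^ (2*l+2) := by positivity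
  have hCone3 : (0:ℝ) < 2 * q ^ q * (16:ℝ) ^ q := by positivity
  have hchoosenn : (0:ℝ) ≤ ((m.choose j):ℝ) := Nat.cast_nonneg _
  rcases le_or_gt (((k:ℝ)+1)^2) (4*M) with hcase | hcase
  · -- case A : (k+1)^2 ≤ 4(m+1)
    have hP : ((k:ℝ)+1) ^ (2*l+1) ≤ (4*M) ^ q := by
      calc ((k:ℝ)+1) ^ (2*l+1) = (((k:ℝ)+1)^2) ^ q := by
            rw [← Real.rpow_natCast ((k:ℝ)+1) 2, ← Real.rpow_mul (le_of_lt hk1)]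
            norm_num [hqdef]; ring_nf
        _ ≤ (4*M) ^ q := Real.rpow_le_rpow (by positivity) hcase (le_of_lt hq)
    have h4M : (4*M) ^ q = 2 ^ (2*l+1) * (M ^ l * Real.sqrt M) := by
      rw [Real.mul_rpow (by norm_num) (le_of_lt hM0)]
      congr 1
      · rw [show (4:ℝ) = 2^(2:ℕ) by norm_num, ← Real.rpow_natCast (2:ℝ) 2,
          ← Real.rpow_mul (by norm_num)]
        norm_num [hqdef]; ring_nf
      · rw [hsqrtM, ← Real.rpow_add hM0, hqdef]
    calc ((m.choose j):ℝ) * ((k:ℝ)+1) ^ (2*l+1)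
        ≤ ((m.choose j):ℝ) * (2 ^ (2*l+1) * (M ^ l * Real.sqrt M)) := by
          apply mul_le_mul_of_nonneg_left _ hchoosenn
          rw [← h4M]; exact hP
      _ = (((m.choose j):ℝ) * Real.sqrt M) * 2 ^ (2*l+1) * M ^ l := by ring
      _ ≤ (2 * 2^m) * 2 ^ (2*l+1) * M ^ l := by
          apply mul_le_mul_of_nonneg_right _ (le_of_lt hMl0)
          apply mul_le_mul_of_nonneg_right hchoose_sqrt (by positivity)
      _ = (2 ^ (2*l+2)) * 2^m * M ^ l := by
          rw [show (2:ℝ)^(2*l+2) = 2^(2*l+1) * 2 by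
            rw [show (2*l+2 : ℝ) = (2*l+1) + 1 by ring,
              Real.rpow_add (by norm_num : (0:ℝ) < 2), Real.rpow_one]]
          ring
      _ ≤ Cone l * 2^m * M ^ l := by
          apply mul_le_mul_of_nonneg_right _ (le_of_lt hMl0)
          apply mul_le_mul_of_nonneg_right _ (le_of_lt h2m)
          rw [Cone, ← hqdef]
          nlinarith [hCone1, hCone3]
  · -- case B : (k+1)^2 > 4(m+1), so k ≥ 4
    have hmk : k ≤ m := by omega
    have hkmR : ((k:ℝ)) ≤ (m:ℝ) := by exact_mod_cast hmk
    have hk4 : 4 ≤ k := by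
      have h1 : 4*((k:ℝ)+1) < ((k:ℝ)+1)^2 := by
        calc 4*((k:ℝ)+1) ≤ 4*M := by rw [hM]; linarith
          _ < _ := hcase
      have h2 : (3:ℝ) < (k:ℝ) := by nlinarith
      have h3 : 3 < k := by exact_mod_cast h2
      omega
    set c : ℕ := m/2 with hc
    set d : ℕ := k/2 with hd
    have hcd : c - d = j := by omega
    have hdc : d ≤ c := by omega
    have hrb := ratio_bound m c d hc hdc (by omega)
    rw [hcd] at hrb
    have hdk : ((k:ℝ)+1)/4 ≤ (d:ℝ) := by
      have h1 : k ≤ 2*d + 1 := by omega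
      have h1R : (k:ℝ) ≤ 2*(d:ℝ)+1 := by exact_mod_cast h1
      have hkR4 : (4:ℝ) ≤ (k:ℝ) := by exact_mod_cast hk4
      linarith
    set P : ℝ := ((k:ℝ)+1) ^ (2*l+1) with hPdef
    have hP0 : (0:ℝ) < P := Real.rpow_pos_of_pos hk1 _
    set u : ℝ := ((k:ℝ)+1)^2/(16*M) with hu
    have hu0 : (0:ℝ) < u := by positivity
    have hexp1 : Real.exp (-(d:ℝ)^2/(m:ℝ)) ≤ Real.exp (-u) := by
      apply Real.exp_le_exp.2
      have hm0R : (0:ℝ) < (m:ℝ) := by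
        have : 0 < m := by omega
        exact_mod_cast this
      rw [neg_div, neg_le_neg_iff, hu]
      have h16 : ((k:ℝ)+1)^2 ≤ 16 * (d:ℝ)^2 := by nlinarith
      calc ((k:ℝ)+1)^2/(16*M) ≤ 16*(d:ℝ)^2/(16*M) := by gcongr
        _ = (d:ℝ)^2/M := mul_div_mul_left _ _ (by norm_num)
        _ ≤ (d:ℝ)^2/(m:ℝ) := by
            apply div_le_div_of_nonneg_left (by positivity) hm0R
            rw [hM]; linarith
    have hexp2 : Real.exp (-u) ≤ q ^ q / u ^ q := by
      have h := exp_poly' u q hu0 hq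
      have huq : (0:ℝ) < u ^ q := Real.rpow_pos_of_pos hu0 q
      rw [le_div_iff₀ huq]
      have hneg : Real.exp (-u) * Real.exp u = 1 := by
        rw [← Real.exp_add]; simp
      have he : (0:ℝ) < Real.exp u := Real.exp_pos u
      have h2 := mul_le_mul_of_nonneg_left h (le_of_lt (Real.exp_pos (-u)))
      calc Real.exp (-u) * u ^ q ≤ Real.exp (-u) * (q^q * Real.exp u) := by
            apply mul_le_mul_of_nonneg_left h (le_of_lt (Real.exp_pos (-u)))
        _ = q ^ q * (Real.exp (-u) * Real.exp u) := by ring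
        _ = q ^ q := by rw [hneg, mul_one]
    have hueq : u ^ q = P / (16 ^ q * M ^ q) := by
      rw [hu, Real.div_rpow (by positivity) (by positivity),
        Real.mul_rpow (by norm_num) (le_of_lt hM0)]
      congr 1
      rw [← Real.rpow_natCast ((k:ℝ)+1) 2, ← Real.rpow_mul (le_of_lt (by positivity : (0:ℝ) < (k:ℝ)+1))]
      rw [hPdef]
      congr 1
      rw [hqdef]; push_cast; ring
    have hMq : M ^ q = M ^ l * Real.sqrt M := by
      rw [hsqrtM, ← Real.rpow_add hM0, hqdef]
    have hchain : q ^ q / u ^ q = q ^ q * 16 ^ q * M ^ q / P := by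
      rw [hueq, div_div_eq_mul_div]; ring
    have hfinal : ((m.choose j):ℝ) * P ≤ 2 * q^q * 16^q * 2^m * M ^ l := by
      calc ((m.choose j):ℝ) * P
          ≤ ((m.choose c):ℝ) * Real.exp (-(d:ℝ)^2/(m:ℝ)) * P := by
            apply mul_le_mul_of_nonneg_right hrb (le_of_lt hP0)
        _ ≤ ((m.choose c):ℝ) * (q ^ q * 16 ^ q * M ^ q / P) * P := by
            apply mul_le_mul_of_nonneg_right _ (le_of_lt hP0)
            apply mul_le_mul_of_nonneg_left _ (Nat.cast_nonneg _)
            rw [← hchain]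
            exact le_trans hexp1 hexp2
        _ = (((m.choose c):ℝ) * Real.sqrt M) * (q ^ q * 16 ^ q) * M ^ l := by
            rw [mul_assoc ((m.choose c):ℝ), div_mul_cancel₀ _ (ne_of_gt hP0), hMq]
            ring
        _ ≤ (2 * 2^m) * (q ^ q * 16 ^ q) * M ^ l := by
            apply mul_le_mul_of_nonneg_right _ (le_of_lt hMl0)
            apply mul_le_mul_of_nonneg_right _ (by positivity)
            have := choose_sqrt m c
            rw [hM]; exact_mod_cast this
        _ = 2 * q^q * 16^q * 2^m * M ^ l := by ring
    calc ((m.choose j):ℝ) * P ≤ 2 * q^q * 16^q * 2^m * M ^ l := hfinal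
      _ ≤ Cone l * 2^m * M ^ l := by
          apply mul_le_mul_of_nonneg_right _ (le_of_lt hMl0)
          apply mul_le_mul_of_nonneg_right _ (le_of_lt h2m)
          rw [Cone, ← hqdef]
          nlinarith [hCone1, hCone2]



noncomputable def Cbig (l : ℝ) : ℝ := 2 ^ (l+1) * Cone l

lemma Cone_pos (l : ℝ) (hl : 0 < l) : 0 < Cone l := by
  rw [Cone]; positivity

lemma Cbig_pos (l : ℝ) (hl : 0 < l) : 0 < Cbig l := by
  have := Cone_pos l hl
  rw [Cbig]; positivity

lemma key (l : ℝ) (hl : 0 < l) (k j : ℕ) :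
    ((k+2*j).factorial : ℝ) * ((k:ℝ)+1) ^ (2*l+1) ≤
      Cbig l * 2^(k+2*j) * (j.factorial : ℝ) * Real.Gamma (l + k + j + 1) := by
  have hfac : ((k+2*j).choose j) * j.factorial * (k+j).factorial = (k+2*j).factorial := by
    have h := Nat.choose_mul_factorial_mul_factorial (show j ≤ k + 2*j by omega)
    convert h using 3
    omega
  have hfacR : ((k+2*j).factorial : ℝ)
      = ((k+2*j).choose j : ℝ) * (j.factorial : ℝ) * ((k+j).factorial : ℝ) := by
    exact_mod_cast hfac.symm
  have h1 := key2 l hl k j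
  have h2 := gamma_nat_lower l hl (k+j)
  have hGarg : l + ((k+j : ℕ) : ℝ) + 1 = l + k + j + 1 := by push_cast; ring
  rw [hGarg] at h2
  -- (m+1)^l ≤ 2^l * ((k+j)+1)^l
  have h3 : (((k:ℝ)+2*j)+1) ^ l ≤ 2^l * (((k:ℝ)+(j:ℝ)) + 1) ^ l := by
    have : (((k:ℝ)+2*j)+1) ≤ 2 * (((k:ℝ)+(j:ℝ)) + 1) := by
      have : (0:ℝ) ≤ (j:ℝ) := Nat.cast_nonneg j
      linarith
    calc (((k:ℝ)+2*j)+1) ^ l ≤ (2 * (((k:ℝ)+(j:ℝ)) + 1)) ^ l :=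
        Real.rpow_le_rpow (by positivity) this (le_of_lt hl)
      _ = 2^l * (((k:ℝ)+(j:ℝ)) + 1) ^ l :=
        Real.mul_rpow (by norm_num) (by positivity)
  have h2' : ((k+j).factorial : ℝ) * (((k:ℝ)+(j:ℝ)) + 1) ^ l ≤ 2 * Real.Gamma (l + k + j + 1) := by
    have : (((k+j:ℕ)):ℝ) + 1 = ((k:ℝ)+(j:ℝ)) + 1 := by push_cast; ring
    rw [← this]; exact h2
  have hGpos : 0 < Real.Gamma (l + k + j + 1) := by
    apply Real.Gamma_pos_of_pos; positivity
  have hfj : (0:ℝ) < (j.factorial : ℝ) := by exact_mod_cast j.factorial_pos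
  have hfkj : (0:ℝ) < ((k+j).factorial : ℝ) := by exact_mod_cast (k+j).factorial_pos
  have hkl : (0:ℝ) ≤ (((k:ℝ)+(j:ℝ)) + 1) ^ l := by positivity
  have h2mp : (0:ℝ) < (2:ℝ)^(k+2*j) := by positivity
  have hCone := Cone_pos l hl
  calc ((k+2*j).factorial : ℝ) * ((k:ℝ)+1) ^ (2*l+1)
      = (((k+2*j).choose j : ℝ) * ((k:ℝ)+1) ^ (2*l+1)) * ((j.factorial : ℝ) * ((k+j).factorial : ℝ)) := by
        rw [hfacR]; ring
    _ ≤ (Cone l * 2^(k+2*j) * (((k:ℝ)+2*j)+1) ^ l) * ((j.factorial : ℝ) * ((k+j).factorial : ℝ)) := by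
        apply mul_le_mul_of_nonneg_right h1 (by positivity)
    _ ≤ (Cone l * 2^(k+2*j) * (2^l * (((k:ℝ)+(j:ℝ)) + 1) ^ l)) * ((j.factorial : ℝ) * ((k+j).factorial : ℝ)) := by
        apply mul_le_mul_of_nonneg_right _ (by positivity)
        apply mul_le_mul_of_nonneg_left h3 (by positivity)
    _ = (Cone l * 2^(k+2*j) * 2^l * (j.factorial : ℝ)) * (((k+j).factorial : ℝ) * (((k:ℝ)+(j:ℝ)) + 1) ^ l) := by
        ring
    _ ≤ (Cone l * 2^(k+2*j) * 2^l * (j.factorial : ℝ)) * (2 * Real.Gamma (l + k + j + 1)) := by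
        apply mul_le_mul_of_nonneg_left h2' (by positivity)
    _ = Cbig l * 2^(k+2*j) * (j.factorial : ℝ) * Real.Gamma (l + k + j + 1) := by
        rw [Cbig, show (2:ℝ)^(l+1) = 2^l * 2 by
          rw [Real.rpow_add (by norm_num : (0:ℝ)<2), Real.rpow_one]]
        ring

theorem besselI_heat_kernel_bound (l : ℝ) (hl : 0 < l) :
    ∃ C : ℝ, 0 < C ∧ ∀ (k : ℕ) (t : ℝ), 0 < t →
      0 ≤ Real.exp (-2 * t) * t ^ (-l) * besselI (l + k) (2 * t) ∧
      Real.exp (-2 * t) * t ^ (-l) * besselI (l + k) (2 * t) ≤ C / ((k : ℝ) + 1) ^ (2 * l + 1) := by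
  refine ⟨Cbig l, Cbig_pos l hl, fun k t ht => ?_⟩
  have ht2 : (2 * t) / 2 = t := by ring
  have hgpos : ∀ j : ℕ, 0 < ((j.factorial : ℝ) * Real.Gamma ((l + k) + j + 1)) := by
    intro j
    apply mul_pos
    · exact_mod_cast j.factorial_pos
    · apply Real.Gamma_pos_of_pos; positivity
  -- the summand of besselI
  set f : ℕ → ℝ := fun j => Real.exp (-2*t) * t ^ (-l) *
      (t ^ ((l + k) + 2 * (j:ℝ)) / ((j.factorial : ℝ) * Real.Gamma ((l + k) + j + 1))) with hf
  have hE : Real.exp (-2 * t) * t ^ (-l) * besselI (l + k) (2 * t) = ∑' j, f j := by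
    rw [besselI, ht2, ← tsum_mul_left]
  have hfnonneg : ∀ j, 0 ≤ f j := by
    intro j
    apply mul_nonneg (mul_nonneg (le_of_lt (Real.exp_pos _)) (Real.rpow_nonneg (le_of_lt ht) _))
    exact div_nonneg (Real.rpow_nonneg (le_of_lt ht) _) (le_of_lt (hgpos j))
  -- simplified form of f
  have hfeq : ∀ j : ℕ, f j = Real.exp (-2*t) * t ^ (k + 2*j : ℕ) /
      ((j.factorial : ℝ) * Real.Gamma ((l + k) + j + 1)) := by
    intro j
    have : t ^ (-l) * t ^ ((l + k) + 2 * (j:ℝ)) = t ^ (k + 2*j : ℕ) := by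
      rw [← Real.rpow_add ht, ← Real.rpow_natCast t (k + 2*j)]
      congr 1
      push_cast; ring
    simp only [hf]
    rw [mul_assoc, ← mul_div_assoc, this, ← mul_div_assoc]
  constructor
  · rw [hE]; exact tsum_nonneg hfnonneg
  -- the comparison series
  set K : ℝ := Cbig l / ((k:ℝ)+1) ^ (2*l+1) with hK
  have hKpos : 0 < K := by
    apply div_pos (Cbig_pos l hl)
    apply Real.rpow_pos_of_pos; positivity
  set g : ℕ → ℝ := fun n => K * Real.exp (-2*t) * ((2*t) ^ n / (n.factorial : ℝ)) with hg
  have hgsummable : Summable g := by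
    apply Summable.mul_left
    exact Real.summable_pow_div_factorial (2*t)
  have hle : ∀ j : ℕ, f j ≤ g (k + 2*j) := by
    intro j
    rw [hfeq j, hg]
    have hkey := key l hl k j
    have hfacpos : (0:ℝ) < ((k+2*j).factorial : ℝ) := by exact_mod_cast (k+2*j).factorial_pos
    have hppos : (0:ℝ) < ((k:ℝ)+1) ^ (2*l+1) := by
      apply Real.rpow_pos_of_pos; positivity
    have h2t : (2*t)^(k+2*j) = 2^(k+2*j) * t^(k+2*j) := mul_pow 2 t (k+2*j)
    -- reduce to key
    rw [div_le_iff₀ (hgpos j)]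
    have hGarg : l + (k:ℝ) + (j:ℝ) + 1 = (l + k) + j + 1 := by ring
    rw [← hGarg]
    have expand : K * Real.exp (-2 * t) * ((2 * t) ^ (k + 2*j) / ((k+2*j).factorial : ℝ)) *
        ((j.factorial : ℝ) * Real.Gamma (l + (k:ℝ) + (j:ℝ) + 1))
        = (Real.exp (-2*t) * t ^ (k+2*j)) *
          ((Cbig l * 2^(k+2*j) * (j.factorial : ℝ) * Real.Gamma (l + k + j + 1)) /
            (((k:ℝ)+1) ^ (2*l+1) * ((k+2*j).factorial : ℝ))) := by
      rw [hK, h2t]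
      field_simp
    rw [expand]
    have hstep : (1:ℝ) ≤ (Cbig l * 2^(k+2*j) * (j.factorial : ℝ) * Real.Gamma (l + k + j + 1)) /
        (((k:ℝ)+1) ^ (2*l+1) * ((k+2*j).factorial : ℝ)) := by
      rw [le_div_iff₀ (by positivity)]
      calc (1:ℝ) * (((k:ℝ)+1) ^ (2*l+1) * ((k+2*j).factorial : ℝ))
          = ((k+2*j).factorial : ℝ) * ((k:ℝ)+1) ^ (2*l+1) := by ring
        _ ≤ _ := hkey
    calc Real.exp (-2*t) * t ^ (k + 2*j)
        = (Real.exp (-2*t) * t ^ (k + 2*j)) * 1 := by ring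
      _ ≤ (Real.exp (-2*t) * t ^ (k + 2*j)) *
          ((Cbig l * 2^(k+2*j) * (j.factorial : ℝ) * Real.Gamma (l + k + j + 1)) /
            (((k:ℝ)+1) ^ (2*l+1) * ((k+2*j).factorial : ℝ))) := by
        apply mul_le_mul_of_nonneg_left hstep (by positivity)
  have hinj : Function.Injective (fun j : ℕ => k + 2*j) := by
    intro a b hab
    simp only at hab
    omega
  have hfsummable : Summable f := by
    apply Summable.of_nonneg_of_le hfnonneg hle
    exact hgsummable.comp_injective hinj
  have hsum_le : ∑' j, f j ≤ ∑' n, g n := by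
    apply Summable.tsum_le_tsum_of_inj _ hinj
    · intro n _
      apply mul_nonneg (by positivity)
      apply div_nonneg (by positivity) (by positivity)
    · exact hle
    · exact hfsummable
    · exact hgsummable
  have hgsum : ∑' n, g n = K := by
    rw [hg, tsum_mul_left]
    have hexp : ∑' n : ℕ, (2*t)^n / (n.factorial : ℝ) = Real.exp (2*t) := by
      rw [Real.exp_eq_exp_ℝ, NormedSpace.exp_eq_tsum_div]
    rw [hexp, mul_assoc, ← Real.exp_add]
    norm_num
  rw [hE]
  calc ∑' j, f j ≤ ∑' n, g n := hsum_le
    _ = K := hgsum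
    _ = Cbig l / ((k:ℝ)+1) ^ (2*l+1) := hK
end

section
/- Let k ∈ ℕ and let a, α, β ∈ ℝ satisfy k + 2a > β + 1 > a, k + β + 1 > 0 and k + α + 1 > 0. Then ( ∫_0^∞ t^{2k+2a-1} ( ∫_{-1}^1 e^{-2t(1+s)} (1-s)^{k+α} (1+s)^{k+β} ds )² dt )^{1/2} ≤ C · Γ(k+1) / (k+1)^{β − 2a + 2}, where C > 0 depends only on a, α, β and not on k. -/
open Real MeasureTheory Set

set_option maxHeartbeats 2000000

-- z^s * exp(-z) ≤ 1 + (⌈s⌉)!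
lemma aux_rpow_mul_exp_neg_le {s z : ℝ} (hs : 0 ≤ s) (hz : 0 < z) :
    z ^ s * Real.exp (-z) ≤ 1 + (Nat.ceil s).factorial := by
  set n := Nat.ceil s with hn
  have hzn : z ^ s ≤ max 1 (z ^ n) := by
    rcases le_or_gt z 1 with h | h
    · exact le_max_of_le_left (Real.rpow_le_one hz.le h hs)
    · refine le_max_of_le_right ?_
      rw [← Real.rpow_natCast z n]
      exact Real.rpow_le_rpow_of_exponent_le h.le (Nat.le_ceil s)
  have hpow : z ^ n ≤ n.factorial * Real.exp z := by
    have := Real.pow_div_factorial_le_exp (x := z) hz.le n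
    rw [div_le_iff₀ (by positivity)] at this
    linarith [this]
  have hexp : Real.exp (-z) ≤ 1 := Real.exp_le_one_iff.mpr (by linarith)
  calc z ^ s * Real.exp (-z) ≤ max 1 (z ^ n) * Real.exp (-z) := by
        exact mul_le_mul_of_nonneg_right hzn (Real.exp_nonneg _)
    _ ≤ 1 + n.factorial := by
        rcases max_cases 1 (z ^ n) with ⟨h1, _⟩ | ⟨h1, _⟩
        · rw [h1]; have : (0:ℝ) ≤ n.factorial := by positivity
          linarith
        · rw [h1]
          calc z ^ n * Real.exp (-z) ≤ (n.factorial * Real.exp z) * Real.exp (-z) :=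
                mul_le_mul_of_nonneg_right hpow (Real.exp_nonneg _)
            _ = n.factorial := by rw [mul_assoc, ← Real.exp_add]; simp
            _ ≤ 1 + n.factorial := by linarith

-- Gamma integral with scale
lemma aux_gamma_scaled {m lam : ℝ} (hm : 0 < m) (hl : 0 < lam) :
    IntegrableOn (fun u : ℝ => u ^ (m - 1) * Real.exp (-(lam * u))) (Ioi 0) ∧
    ∫ u in Ioi (0:ℝ), u ^ (m - 1) * Real.exp (-(lam * u)) = lam ^ (-m) * Real.Gamma m := by
  constructor
  · have := integrableOn_rpow_mul_exp_neg_mul_rpow (by linarith : (-1:ℝ) < m - 1)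
      (by norm_num : (0:ℝ) < 1) hl
    refine this.congr_fun (fun x hx => ?_) measurableSet_Ioi
    simp only [Real.rpow_one, neg_mul]
  · rw [Real.integral_rpow_mul_exp_neg_mul_Ioi hm hl]
    rw [one_div, Real.inv_rpow hl.le, ← Real.rpow_neg hl.le]

-- Wendel: for 0 ≤ s ≤ 1, x > 0 : Γ(x+s) ≤ Γ(x) * x^s
lemma aux_wendel {x s : ℝ} (hx : 0 < x) (hs0 : 0 ≤ s) (hs1 : s ≤ 1) :
    Real.Gamma (x + s) ≤ Real.Gamma x * x ^ s := by
  rcases eq_or_lt_of_le hs0 with h0 | h0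
  · simp [← h0]
  rcases eq_or_lt_of_le hs1 with h1 | h1
  · rw [h1, Real.rpow_one, Real.Gamma_add_one hx.ne', mul_comm]
  have key := Real.Gamma_mul_add_mul_le_rpow_Gamma_mul_rpow_Gamma
    (s := x) (t := x + 1) (a := 1 - s) (b := s) hx (by linarith) (by linarith) h0 (by ring)
  have hxs : (1 - s) * x + s * (x + 1) = x + s := by ring
  rw [hxs] at key
  have hΓ : 0 < Real.Gamma x := Real.Gamma_pos_of_pos hx
  calc Real.Gamma (x + s) ≤ Real.Gamma x ^ (1 - s) * Real.Gamma (x + 1) ^ s := key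
    _ = Real.Gamma x ^ (1 - s) * (x ^ s * Real.Gamma x ^ s) := by
        rw [Real.Gamma_add_one hx.ne', Real.mul_rpow hx.le hΓ.le]
    _ = (Real.Gamma x ^ (1 - s) * Real.Gamma x ^ s) * x ^ s := by ring
    _ = Real.Gamma x * x ^ s := by
        rw [← Real.rpow_add hΓ]; norm_num

-- Γ(x+γ) ≤ Γ(x) * (x+γ)^γ for x ≥ 1, 0 ≤ γ
lemma aux_gamma_up : ∀ n : ℕ, ∀ γ : ℝ, 0 ≤ γ → γ ≤ n → ∀ x : ℝ, 1 ≤ x →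
    Real.Gamma (x + γ) ≤ Real.Gamma x * (x + γ) ^ γ := by
  intro n
  induction n with
  | zero =>
    intro γ h0 h1 x hx
    have : γ = 0 := le_antisymm (by exact_mod_cast h1) h0
    simp [this]
  | succ n ih =>
    intro γ h0 h1 x hx
    rcases le_or_gt γ 1 with hγ | hγ
    · calc Real.Gamma (x + γ) ≤ Real.Gamma x * x ^ γ := aux_wendel (by linarith) h0 hγ
        _ ≤ Real.Gamma x * (x + γ) ^ γ := by
            refine mul_le_mul_of_nonneg_left ?_ (Real.Gamma_nonneg_of_nonneg (by linarith))
            exact Real.rpow_le_rpow (by linarith) (by linarith) h0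
    · have h2 : Real.Gamma (x + γ) = (x + γ - 1) * Real.Gamma (x + (γ - 1)) := by
        have : x + γ = (x + (γ - 1)) + 1 := by ring
        rw [this, Real.Gamma_add_one (show x + (γ - 1) ≠ 0 by intro h; nlinarith)]
        ring_nf
      have h3 := ih (γ - 1) (by linarith) (by push_cast at h1 ⊢; linarith) x hx
      have hΓx : 0 ≤ Real.Gamma x := Real.Gamma_nonneg_of_nonneg (by linarith)
      have hb : (0:ℝ) < x + (γ - 1) := by linarith
      calc Real.Gamma (x + γ) = (x + γ - 1) * Real.Gamma (x + (γ - 1)) := h2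
        _ ≤ (x + γ - 1) * (Real.Gamma x * (x + (γ - 1)) ^ (γ - 1)) := by
            refine mul_le_mul_of_nonneg_left h3 (by linarith)
        _ ≤ (x + γ) * (Real.Gamma x * (x + γ) ^ (γ - 1)) := by
            refine mul_le_mul (by linarith) (mul_le_mul_of_nonneg_left
              (Real.rpow_le_rpow hb.le (by linarith) (by linarith)) hΓx) ?_ (by linarith)
            positivity
        _ = Real.Gamma x * ((x + γ) ^ (1:ℝ) * (x + γ) ^ (γ - 1)) := by
            rw [Real.rpow_one]; ring
        _ = Real.Gamma x * (x + γ) ^ γ := by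
            rw [← Real.rpow_add (by linarith)]; norm_num

-- Γ(x) * x^γ ≤ 2 * Γ(x+γ) for x ≥ 1, 0 ≤ γ
lemma aux_gamma_low : ∀ n : ℕ, ∀ γ : ℝ, 0 ≤ γ → γ ≤ n → ∀ x : ℝ, 1 ≤ x →
    Real.Gamma x * x ^ γ ≤ 2 * Real.Gamma (x + γ) := by
  intro n
  induction n with
  | zero =>
    intro γ h0 h1 x hx
    have hγ0 : γ = 0 := le_antisymm (by exact_mod_cast h1) h0
    subst hγ0
    have hp := Real.Gamma_pos_of_pos (show (0:ℝ) < x by linarith)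
    simp only [add_zero, Real.rpow_zero, mul_one]
    linarith
  | succ n ih =>
    intro γ h0 h1 x hx
    have hx0 : (0:ℝ) < x := by linarith
    have hΓx : 0 < Real.Gamma x := Real.Gamma_pos_of_pos hx0
    rcases le_or_gt γ 1 with hγ | hγ
    · -- Γ(x+1) ≤ Γ(x+γ) * (x+γ)^(1-γ)
      have key : Real.Gamma (x + 1) ≤ Real.Gamma (x + γ) * (x + γ) ^ (1 - γ) := by
        have := aux_wendel (x := x + γ) (s := 1 - γ) (by linarith) (by linarith) (by linarith)
        have hxy : x + γ + (1 - γ) = x + 1 := by ring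
        rwa [hxy] at this
      rw [Real.Gamma_add_one hx0.ne'] at key
      -- so x Γ(x) ≤ Γ(x+γ) (x+γ)^{1-γ}; multiply both sides by x^{γ-1}
      have hxγ : (0:ℝ) < x + γ := by linarith
      have step : x * Real.Gamma x * x ^ (γ - 1) ≤
          Real.Gamma (x + γ) * ((x + γ) ^ (1 - γ) * x ^ (γ - 1)) := by
        have := mul_le_mul_of_nonneg_right key (le_of_lt (Real.rpow_pos_of_pos hx0 (γ - 1)))
        calc x * Real.Gamma x * x ^ (γ - 1) ≤ Real.Gamma (x + γ) * (x + γ) ^ (1 - γ) * x ^ (γ - 1) := this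
          _ = Real.Gamma (x + γ) * ((x + γ) ^ (1 - γ) * x ^ (γ - 1)) := by ring
      have lhs_eq : x * Real.Gamma x * x ^ (γ - 1) = Real.Gamma x * x ^ γ := by
        rw [show x * Real.Gamma x * x ^ (γ - 1) = Real.Gamma x * (x ^ (1:ℝ) * x ^ (γ - 1)) by
          rw [Real.rpow_one]; ring, ← Real.rpow_add hx0]
        norm_num
      have ratio : (x + γ) ^ (1 - γ) * x ^ (γ - 1) ≤ 2 := by
        have hxg1 : x ^ (γ - 1) = (x ^ (1 - γ))⁻¹ := by
          rw [show γ - 1 = -(1 - γ) by ring, Real.rpow_neg hx0.le]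
        rw [hxg1, ← div_eq_mul_inv, ← Real.div_rpow hxγ.le hx0.le]
        have hbase : (x + γ) / x ≤ 2 := by
          rw [div_le_iff₀ hx0]; linarith
        have hbase1 : 1 ≤ (x + γ) / x := by
          rw [le_div_iff₀ hx0]; linarith
        calc ((x + γ) / x) ^ (1 - γ) ≤ ((x + γ) / x) ^ (1:ℝ) :=
              Real.rpow_le_rpow_of_exponent_le hbase1 (by linarith)
          _ = (x + γ) / x := Real.rpow_one _
          _ ≤ 2 := hbase
      have hΓxγ : 0 ≤ Real.Gamma (x + γ) := Real.Gamma_nonneg_of_nonneg (by linarith)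
      calc Real.Gamma x * x ^ γ = x * Real.Gamma x * x ^ (γ - 1) := lhs_eq.symm
        _ ≤ Real.Gamma (x + γ) * ((x + γ) ^ (1 - γ) * x ^ (γ - 1)) := step
        _ ≤ Real.Gamma (x + γ) * 2 := mul_le_mul_of_nonneg_left ratio hΓxγ
        _ = 2 * Real.Gamma (x + γ) := by ring
    · have h3 := ih (γ - 1) (by linarith) (by push_cast at h1 ⊢; linarith) x hx
      have hb : (0:ℝ) < x + (γ - 1) := by linarith
      have hΓb : 0 < Real.Gamma (x + (γ - 1)) := Real.Gamma_pos_of_pos hb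
      have h2 : Real.Gamma (x + γ) = (x + γ - 1) * Real.Gamma (x + (γ - 1)) := by
        have : x + γ = (x + (γ - 1)) + 1 := by ring
        rw [this, Real.Gamma_add_one hb.ne']
        ring_nf
      have lhs_eq : Real.Gamma x * x ^ γ = (Real.Gamma x * x ^ (γ - 1)) * x := by
        rw [show Real.Gamma x * x ^ (γ-1) * x = Real.Gamma x * (x ^ (γ-1) * x ^ (1:ℝ)) by
          rw [Real.rpow_one]; ring, ← Real.rpow_add hx0]
        norm_num
      calc Real.Gamma x * x ^ γ = (Real.Gamma x * x ^ (γ - 1)) * x := lhs_eq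
        _ ≤ (2 * Real.Gamma (x + (γ - 1))) * x := by
            refine mul_le_mul_of_nonneg_right h3 (by linarith)
        _ ≤ (2 * Real.Gamma (x + (γ - 1))) * (x + γ - 1) := by
            refine mul_le_mul_of_nonneg_left (by linarith) (by positivity)
        _ = 2 * Real.Gamma (x + γ) := by rw [h2]; ring

lemma aux_gautschi (β : ℝ) :
    ∀ k : ℕ, 1 + 2 * |β| ≤ (k : ℝ) →
      Real.Gamma ((k:ℝ) + β + 1) ≤
        (2 ^ (|β| + 1) + (1 + |β|) ^ |β|) * ((k:ℝ) + 1) ^ β * Real.Gamma ((k:ℝ) + 1) := by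
  intro k hk
  have habs := abs_nonneg β
  have hk1 : (1:ℝ) ≤ (k:ℝ) + 1 := by have := Nat.cast_nonneg (α := ℝ) k; linarith
  have hΓk : 0 < Real.Gamma ((k:ℝ) + 1) := Real.Gamma_pos_of_pos (by positivity)
  have hC2 : (0:ℝ) < 2 ^ (|β| + 1) := Real.rpow_pos_of_pos two_pos _
  have hC1 : (0:ℝ) < (1 + |β|) ^ |β| := Real.rpow_pos_of_pos (by linarith) _
  rcases le_or_gt 0 β with hβ | hβ
  · rw [show |β| = β from abs_of_nonneg hβ] at *
    have key := aux_gamma_up (Nat.ceil β) β hβ (Nat.le_ceil β) ((k:ℝ)+1) hk1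
    have hbase : (k:ℝ) + 1 + β ≤ (1 + β) * ((k:ℝ) + 1) := by nlinarith
    have h2 : ((k:ℝ) + 1 + β) ^ β ≤ (1 + β) ^ β * ((k:ℝ)+1) ^ β := by
      rw [← Real.mul_rpow (by linarith) (by positivity)]
      exact Real.rpow_le_rpow (by positivity) hbase hβ
    calc Real.Gamma ((k:ℝ) + β + 1) = Real.Gamma (((k:ℝ) + 1) + β) := by ring_nf
      _ ≤ Real.Gamma ((k:ℝ)+1) * (((k:ℝ)+1) + β) ^ β := key
      _ ≤ Real.Gamma ((k:ℝ)+1) * ((1 + β) ^ β * ((k:ℝ)+1) ^ β) := by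
          refine mul_le_mul_of_nonneg_left ?_ hΓk.le
          calc (((k:ℝ)+1) + β) ^ β = ((k:ℝ) + 1 + β) ^ β := by ring_nf
            _ ≤ (1 + β) ^ β * ((k:ℝ)+1) ^ β := h2
      _ = (1 + β) ^ β * ((k:ℝ)+1) ^ β * Real.Gamma ((k:ℝ)+1) := by ring
      _ ≤ (2 ^ (β + 1) + (1 + β) ^ β) * ((k:ℝ) + 1) ^ β * Real.Gamma ((k:ℝ) + 1) := by
          have hp : (0:ℝ) < ((k:ℝ)+1) ^ β := Real.rpow_pos_of_pos (by positivity) _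
          refine mul_le_mul_of_nonneg_right (mul_le_mul_of_nonneg_right ?_ hp.le) hΓk.le
          linarith
  · rw [show |β| = -β from abs_of_neg hβ] at *
    set x : ℝ := (k:ℝ) + β + 1 with hxdef
    have hx1 : (1:ℝ) ≤ x := by
      simp only [hxdef]; linarith
    have key := aux_gamma_low (Nat.ceil (-β)) (-β) (by linarith) (Nat.le_ceil (-β)) x hx1
    have hxγ : x + -β = (k:ℝ) + 1 := by simp only [hxdef]; ring
    rw [hxγ] at key
    -- Γ(x) ≤ 2 Γ(k+1) x^β
    have hx0 : (0:ℝ) < x := by linarith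
    have hxp : (0:ℝ) < x ^ (-β) := Real.rpow_pos_of_pos hx0 _
    have hΓx : Real.Gamma x ≤ 2 * Real.Gamma ((k:ℝ)+1) * x ^ β := by
      have hxinv : x ^ β = (x ^ (-β))⁻¹ := by
        rw [← Real.rpow_neg hx0.le]; norm_num
      rw [hxinv, ← div_eq_mul_inv, le_div_iff₀ hxp]
      linarith [key]
    have hhalf : ((k:ℝ) + 1) / 2 ≤ x := by
      simp only [hxdef]; linarith
    have hhalfpos : (0:ℝ) < ((k:ℝ) + 1) / 2 := by positivity
    have hxβ : x ^ β ≤ 2 ^ (-β) * ((k:ℝ)+1) ^ β := by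
      calc x ^ β ≤ (((k:ℝ)+1)/2) ^ β :=
            Real.rpow_le_rpow_of_nonpos hhalfpos hhalf hβ.le
        _ = ((k:ℝ)+1) ^ β / 2 ^ β := Real.div_rpow (by positivity) (by norm_num) β
        _ = 2 ^ (-β) * ((k:ℝ)+1) ^ β := by
            rw [Real.rpow_neg (by norm_num : (0:ℝ) ≤ 2)]
            ring
    have hkp : (0:ℝ) < ((k:ℝ)+1) ^ β := Real.rpow_pos_of_pos (by positivity) _
    calc Real.Gamma ((k:ℝ) + β + 1) = Real.Gamma x := by rw [hxdef]
      _ ≤ 2 * Real.Gamma ((k:ℝ)+1) * x ^ β := hΓx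
      _ ≤ 2 * Real.Gamma ((k:ℝ)+1) * (2 ^ (-β) * ((k:ℝ)+1) ^ β) := by
          refine mul_le_mul_of_nonneg_left hxβ (by positivity)
      _ = 2 ^ (-β + 1) * ((k:ℝ)+1) ^ β * Real.Gamma ((k:ℝ)+1) := by
          rw [Real.rpow_add (by norm_num : (0:ℝ) < 2), Real.rpow_one]; ring
      _ ≤ (2 ^ (-β + 1) + (1 + -β) ^ (-β)) * ((k:ℝ) + 1) ^ β * Real.Gamma ((k:ℝ) + 1) := by
          refine mul_le_mul_of_nonneg_right (mul_le_mul_of_nonneg_right ?_ hkp.le) hΓk.le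
          linarith

lemma aux_phi_cont (p δ c : ℝ) (hc : 0 < c) :
    ContinuousOn (fun t : ℝ => t ^ (p-1) * (2*t+c) ^ (-(p+δ))) (Ioi 0) := by
  refine ContinuousOn.mul ?_ ?_
  · exact continuousOn_id.rpow_const fun x hx => Or.inl (ne_of_gt hx)
  · refine ContinuousOn.rpow_const
      ((continuous_const.mul continuous_id).add continuous_const).continuousOn
      fun x hx => Or.inl ?_
    have hx0 : (0:ℝ) < x := hx
    positivity

lemma aux_phi_nonneg (p δ c : ℝ) (hc : 0 < c) {t : ℝ} (ht : 0 < t) :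
    0 ≤ t ^ (p-1) * (2*t+c) ^ (-(p+δ)) := by positivity

-- tail estimate and gluing
lemma aux_K (p δ c T S₁ : ℝ) (hp : 0 < p) (hδ : 0 < δ) (hc : 0 < c) (hT : 0 < T)
    (hhead_int : IntegrableOn (fun t : ℝ => t ^ (p-1) * (2*t+c) ^ (-(p+δ))) (Ioc 0 T))
    (hhead_le : ∫ t in Ioc (0:ℝ) T, t ^ (p-1) * (2*t+c) ^ (-(p+δ)) ≤ S₁) :
    IntegrableOn (fun t : ℝ => t ^ (p-1) * (2*t+c) ^ (-(p+δ))) (Ioi 0) ∧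
    ∫ t in Ioi (0:ℝ), t ^ (p-1) * (2*t+c) ^ (-(p+δ)) ≤ S₁ + 2 ^ (-(p+δ)) * (T ^ (-δ) / δ) := by
  set φ := fun t : ℝ => t ^ (p-1) * (2*t+c) ^ (-(p+δ)) with hφ
  have hbound : ∀ t ∈ Ioi T, φ t ≤ 2 ^ (-(p+δ)) * t ^ (-1-δ) := by
    intro t ht
    have ht0 : (0:ℝ) < t := lt_trans hT ht
    have h1 : (2*t+c) ^ (-(p+δ)) ≤ (2*t) ^ (-(p+δ)) :=
      Real.rpow_le_rpow_of_nonpos (by linarith) (by linarith) (by linarith)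
    have h2 : t ^ (p-1) * (2*t) ^ (-(p+δ)) = 2 ^ (-(p+δ)) * t ^ (-1-δ) := by
      rw [Real.mul_rpow (by norm_num) ht0.le, ← mul_assoc,
        mul_comm (t ^ (p-1)) ((2:ℝ) ^ (-(p+δ))), mul_assoc, ← Real.rpow_add ht0]
      ring_nf
    calc φ t ≤ t ^ (p-1) * (2*t) ^ (-(p+δ)) :=
          mul_le_mul_of_nonneg_left h1 (Real.rpow_nonneg ht0.le _)
      _ = 2 ^ (-(p+δ)) * t ^ (-1-δ) := h2
  have hmaj : IntegrableOn (fun t : ℝ => 2 ^ (-(p+δ)) * t ^ (-1-δ)) (Ioi T) :=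
    (integrableOn_Ioi_rpow_of_lt (by linarith) hT).const_mul _
  have hmeas : AEStronglyMeasurable φ (volume.restrict (Ioi T)) :=
    ((aux_phi_cont p δ c hc).mono (fun x hx => lt_trans hT hx)).aestronglyMeasurable
      measurableSet_Ioi
  have htail_int : IntegrableOn φ (Ioi T) := by
    refine hmaj.mono' hmeas ?_
    refine (ae_restrict_iff' measurableSet_Ioi).2 (ae_of_all _ fun t ht => ?_)
    have ht0 : (0:ℝ) < t := lt_trans hT ht
    rw [Real.norm_eq_abs, abs_of_nonneg (aux_phi_nonneg p δ c hc ht0)]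
    exact hbound t ht
  have htail_le : ∫ t in Ioi T, φ t ≤ 2 ^ (-(p+δ)) * (T ^ (-δ) / δ) := by
    have h₁ : ∫ t in Ioi T, φ t ≤ ∫ t in Ioi T, 2 ^ (-(p+δ)) * t ^ (-1-δ) := by
      refine integral_mono_of_nonneg ?_ hmaj ?_
      · exact (ae_restrict_iff' measurableSet_Ioi).2 (ae_of_all _ fun t ht =>
          aux_phi_nonneg p δ c hc (lt_trans hT ht))
      · exact (ae_restrict_iff' measurableSet_Ioi).2 (ae_of_all _ hbound)
    have h₂ : ∫ t in Ioi T, (2:ℝ) ^ (-(p+δ)) * t ^ (-1-δ) = 2 ^ (-(p+δ)) * (T ^ (-δ) / δ) := by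
      rw [integral_const_mul, integral_Ioi_rpow_of_lt (by linarith) hT]
      congr 1
      rw [show (-1-δ+1) = -δ by ring]
      rw [div_neg, neg_div, neg_neg]
    linarith
  have hun : Ioc (0:ℝ) T ∪ Ioi T = Ioi 0 := Ioc_union_Ioi_eq_Ioi hT.le
  constructor
  · rw [← hun]; exact hhead_int.union htail_int
  · rw [← hun, setIntegral_union (Ioc_disjoint_Ioi le_rfl) measurableSet_Ioi hhead_int htail_int]
    exact add_le_add hhead_le htail_le

lemma aux_head_small (p δ c : ℝ) (hp : 0 < p) (hδ : 0 < δ) (hc : 0 < c) :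
    IntegrableOn (fun t : ℝ => t ^ (p-1) * (2*t+c) ^ (-(p+δ))) (Ioc 0 c) ∧
    ∫ t in Ioc (0:ℝ) c, t ^ (p-1) * (2*t+c) ^ (-(p+δ)) ≤ c ^ (-δ) / p := by
  set φ := fun t : ℝ => t ^ (p-1) * (2*t+c) ^ (-(p+δ)) with hφ
  have hbound : ∀ t ∈ Ioc (0:ℝ) c, φ t ≤ c ^ (-(p+δ)) * t ^ (p-1) := by
    intro t ht
    have ht0 : 0 < t := ht.1
    have h1 : (2*t+c) ^ (-(p+δ)) ≤ c ^ (-(p+δ)) :=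
      Real.rpow_le_rpow_of_nonpos hc (by linarith) (by linarith)
    calc φ t ≤ t ^ (p-1) * c ^ (-(p+δ)) :=
          mul_le_mul_of_nonneg_left h1 (Real.rpow_nonneg ht0.le _)
      _ = c ^ (-(p+δ)) * t ^ (p-1) := by ring
  have hmaj : IntegrableOn (fun t : ℝ => c ^ (-(p+δ)) * t ^ (p-1)) (Ioc 0 c) := by
    have := (intervalIntegral.intervalIntegrable_rpow' (a := 0) (b := c)
      (show (-1:ℝ) < p - 1 by linarith))
    exact ((intervalIntegrable_iff_integrableOn_Ioc_of_le hc.le).mp this).const_mul _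
  have hmeas : AEStronglyMeasurable φ (volume.restrict (Ioc (0:ℝ) c)) :=
    ((aux_phi_cont p δ c hc).mono (fun x hx => hx.1)).aestronglyMeasurable measurableSet_Ioc
  have hint : IntegrableOn φ (Ioc 0 c) := by
    refine hmaj.mono' hmeas ?_
    refine (ae_restrict_iff' measurableSet_Ioc).2 (ae_of_all _ fun t ht => ?_)
    rw [Real.norm_eq_abs, abs_of_nonneg (aux_phi_nonneg p δ c hc ht.1)]
    exact hbound t ht
  refine ⟨hint, ?_⟩
  have h₁ : ∫ t in Ioc (0:ℝ) c, φ t ≤ ∫ t in Ioc (0:ℝ) c, c ^ (-(p+δ)) * t ^ (p-1) := by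
    refine integral_mono_of_nonneg ?_ hmaj ?_
    · exact (ae_restrict_iff' measurableSet_Ioc).2 (ae_of_all _ fun t ht =>
        aux_phi_nonneg p δ c hc ht.1)
    · exact (ae_restrict_iff' measurableSet_Ioc).2 (ae_of_all _ hbound)
  have h₂ : ∫ t in Ioc (0:ℝ) c, c ^ (-(p+δ)) * t ^ (p-1) = c ^ (-δ) / p := by
    rw [integral_const_mul]
    have h3 : ∫ t in Ioc (0:ℝ) c, t ^ (p-1) = ∫ t in (0:ℝ)..c, t ^ (p-1) := by
      rw [intervalIntegral.integral_of_le hc.le]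
    rw [h3, integral_rpow (Or.inl (by linarith)),
      show p - 1 + 1 = p by ring, Real.zero_rpow hp.ne', sub_zero,
      ← mul_div_assoc, ← Real.rpow_add hc, show -(p+δ)+p = -δ by ring]
  linarith

lemma aux_head_large (p δ c : ℝ) (hp : 1 < p) (hδ : 0 < δ) (hc : 0 < c) :
    IntegrableOn (fun t : ℝ => t ^ (p-1) * (2*t+c) ^ (-(p+δ))) (Ioc 0 ((p-1)*c/2)) ∧
    ∫ t in Ioc (0:ℝ) ((p-1)*c/2), t ^ (p-1) * (2*t+c) ^ (-(p+δ)) ≤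
      ((1/2) ^ (p-1) * (1 + (Nat.ceil (1+δ)).factorial) * ((p-1)*c) ^ (-(1+δ))) * ((p-1)*c/2) := by
  set Cδ : ℝ := 1 + (Nat.ceil (1+δ)).factorial with hCδ
  set A : ℝ := (p-1)*c with hA
  have hA0 : 0 < A := mul_pos (by linarith) hc
  set T : ℝ := A/2 with hT
  have hT0 : 0 < T := by positivity
  set M : ℝ := (1/2) ^ (p-1) * Cδ * A ^ (-(1+δ)) with hM
  set φ := fun t : ℝ => t ^ (p-1) * (2*t+c) ^ (-(p+δ)) with hφ
  have hCδ0 : (0:ℝ) < Cδ := by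
    rw [hCδ]; positivity
  have hbound : ∀ t ∈ Ioc (0:ℝ) T, φ t ≤ M := by
    intro t ht
    have ht0 : 0 < t := ht.1
    set lam : ℝ := 2*t+c with hlam
    have hlam0 : 0 < lam := by positivity
    have hsplit : φ t = (t/lam) ^ (p-1) * lam ^ (-(1+δ)) := by
      rw [hφ]
      simp only []
      rw [Real.div_rpow ht0.le hlam0.le, div_mul_eq_mul_div, div_eq_mul_inv,
        ← Real.rpow_neg hlam0.le, mul_assoc, ← Real.rpow_add hlam0]
      congr 2
      ring
    have hstep2 : t/lam ≤ (1/2) * Real.exp (-(c/lam)) := by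
      have hexp : 1 - c/lam ≤ Real.exp (-(c/lam)) := by
        have := Real.add_one_le_exp (-(c/lam))
        linarith
      have h2t : t/lam = (1/2) * (1 - c/lam) := by
        field_simp
        ring
      rw [h2t]
      exact mul_le_mul_of_nonneg_left hexp (by norm_num)
    have hstep3 : (t/lam) ^ (p-1) ≤ (1/2) ^ (p-1) * Real.exp (-(c/lam) * (p-1)) := by
      calc (t/lam) ^ (p-1) ≤ ((1/2) * Real.exp (-(c/lam))) ^ (p-1) :=
            Real.rpow_le_rpow (by positivity) hstep2 (by linarith)
        _ = (1/2) ^ (p-1) * Real.exp (-(c/lam)) ^ (p-1) := by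
            rw [Real.mul_rpow (by norm_num) (Real.exp_nonneg _)]
        _ = (1/2) ^ (p-1) * Real.exp (-(c/lam) * (p-1)) := by
            rw [← Real.exp_mul]
    have hstep4 : Real.exp (-(c/lam) * (p-1)) * lam ^ (-(1+δ)) ≤ Cδ * A ^ (-(1+δ)) := by
      set z : ℝ := A / lam with hz
      have hz0 : 0 < z := by positivity
      have hzz : -(c/lam) * (p-1) = -z := by
        rw [hz, hA]; ring
      rw [hzz]
      have hkey := aux_rpow_mul_exp_neg_le (s := 1+δ) (z := z) (by linarith) hz0
      have hzpow : 0 < z ^ (1+δ) := Real.rpow_pos_of_pos hz0 _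
      have hkey' : z ^ (1+δ) * Real.exp (-z) ≤ Cδ := by rw [hCδ]; exact hkey
      have hexp_le : Real.exp (-z) ≤ Cδ * z ^ (-(1+δ)) := by
        rw [Real.rpow_neg hz0.le, ← div_eq_mul_inv, le_div_iff₀ hzpow]
        calc Real.exp (-z) * z ^ (1+δ) = z ^ (1+δ) * Real.exp (-z) := by ring
          _ ≤ Cδ := hkey'
      have hzA : z ^ (-(1+δ)) = A ^ (-(1+δ)) * lam ^ (1+δ) := by
        rw [hz, Real.div_rpow hA0.le hlam0.le, Real.rpow_neg hlam0.le, div_eq_mul_inv, inv_inv]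
      calc Real.exp (-z) * lam ^ (-(1+δ)) ≤ (Cδ * z ^ (-(1+δ))) * lam ^ (-(1+δ)) :=
            mul_le_mul_of_nonneg_right hexp_le (Real.rpow_nonneg hlam0.le _)
        _ = Cδ * A ^ (-(1+δ)) * (lam ^ (1+δ) * lam ^ (-(1+δ))) := by rw [hzA]; ring
        _ = Cδ * A ^ (-(1+δ)) := by
            rw [← Real.rpow_add hlam0, show (1+δ) + -(1+δ) = 0 by ring, Real.rpow_zero, mul_one]
    calc φ t = (t/lam) ^ (p-1) * lam ^ (-(1+δ)) := hsplit
      _ ≤ ((1/2) ^ (p-1) * Real.exp (-(c/lam) * (p-1))) * lam ^ (-(1+δ)) := by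
          refine mul_le_mul_of_nonneg_right hstep3 (Real.rpow_nonneg hlam0.le _)
      _ = (1/2) ^ (p-1) * (Real.exp (-(c/lam) * (p-1)) * lam ^ (-(1+δ))) := by ring
      _ ≤ (1/2) ^ (p-1) * (Cδ * A ^ (-(1+δ))) := by
          refine mul_le_mul_of_nonneg_left hstep4 (Real.rpow_nonneg (by norm_num) _)
      _ = M := by rw [hM]; ring
  have hmaj : IntegrableOn (fun _ : ℝ => M) (Ioc 0 T) := by
    exact integrableOn_const measure_Ioc_lt_top.ne
  have hmeas : AEStronglyMeasurable φ (volume.restrict (Ioc (0:ℝ) T)) :=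
    ((aux_phi_cont p δ c hc).mono (fun x hx => hx.1)).aestronglyMeasurable measurableSet_Ioc
  have hint : IntegrableOn φ (Ioc 0 T) := by
    refine hmaj.mono' hmeas ?_
    refine (ae_restrict_iff' measurableSet_Ioc).2 (ae_of_all _ fun t ht => ?_)
    rw [Real.norm_eq_abs, abs_of_nonneg (aux_phi_nonneg p δ c hc ht.1)]
    exact hbound t ht
  refine ⟨hint, ?_⟩
  have h₁ : ∫ t in Ioc (0:ℝ) T, φ t ≤ ∫ t in Ioc (0:ℝ) T, M := by
    refine integral_mono_of_nonneg ?_ hmaj ?_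
    · exact (ae_restrict_iff' measurableSet_Ioc).2 (ae_of_all _ fun t ht =>
        aux_phi_nonneg p δ c hc ht.1)
    · exact (ae_restrict_iff' measurableSet_Ioc).2 (ae_of_all _ hbound)
  have h₂ : ∫ _ in Ioc (0:ℝ) T, M = M * T := by
    rw [setIntegral_const, Real.volume_real_Ioc_of_le hT0.le, smul_eq_mul, sub_zero,
      mul_comm]
  calc ∫ t in Ioc (0:ℝ) T, φ t ≤ M * T := by rw [← h₂]; exact h₁
    _ = ((1/2) ^ (p-1) * Cδ * A ^ (-(1+δ))) * T := by rw [hM]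

lemma aux_inner_nonneg (t w x : ℝ) :
    0 ≤ ∫ s in (-1:ℝ)..1, Real.exp (-2*t*(1+s)) * (1-s) ^ w * (1+s) ^ x := by
  refine intervalIntegral.integral_nonneg (by norm_num) fun s hs => ?_
  have h1 : 0 ≤ 1 - s := by linarith [hs.2]
  have h2 : 0 ≤ 1 + s := by linarith [hs.1]
  positivity

lemma aux_inner_eq (t w x : ℝ) :
    (∫ s in (-1:ℝ)..1, Real.exp (-2*t*(1+s)) * (1-s) ^ w * (1+s) ^ x)
      = ∫ u in Ioc (0:ℝ) 2, Real.exp (-2*t*u) * (2-u) ^ w * u ^ x := by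
  have h1 : (∫ s in (-1:ℝ)..1, Real.exp (-2*t*(1+s)) * (1-s) ^ w * (1+s) ^ x)
      = ∫ s in (-1:ℝ)..1,
          (fun u : ℝ => Real.exp (-2*t*u) * (2-u) ^ w * u ^ x) (s+1) := by
    refine intervalIntegral.integral_congr fun s hs => ?_
    simp only
    rw [show (2:ℝ)-(s+1) = 1-s by ring, show (1:ℝ)+s = s+1 by ring]
  have h2 := intervalIntegral.integral_comp_add_right (a := -1) (b := 1)
    (fun u : ℝ => Real.exp (-2*t*u) * (2-u) ^ w * u ^ x) 1
  rw [h1, h2, show (-1:ℝ)+1 = 0 by norm_num, show (1:ℝ)+1 = 2 by norm_num,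
    intervalIntegral.integral_of_le (by norm_num : (0:ℝ) ≤ 2)]

-- core comparison lemma on (0,2]
lemma aux_inner_core (m lam E R : ℝ) (hm : 0 < m) (hl : 0 < lam) (hE : 0 ≤ E)
    (F G : ℝ → ℝ)
    (hF0 : ∀ u ∈ Ioc (0:ℝ) 2, 0 ≤ F u)
    (hFG : ∀ u ∈ Ioc (0:ℝ) 2, F u ≤ E * (u ^ (m-1) * Real.exp (-(lam * u))) + G u)
    (hGint : IntegrableOn G (Ioc 0 2))
    (hGle : ∫ u in Ioc (0:ℝ) 2, G u ≤ R) :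
    ∫ u in Ioc (0:ℝ) 2, F u ≤ E * (lam ^ (-m) * Real.Gamma m) + R := by
  obtain ⟨hHint, hHval⟩ := aux_gamma_scaled hm hl
  have hHIoc : IntegrableOn (fun u : ℝ => u ^ (m-1) * Real.exp (-(lam * u))) (Ioc 0 2) :=
    hHint.mono_set Ioc_subset_Ioi_self
  have hgint : IntegrableOn
      (fun u : ℝ => E * (u ^ (m-1) * Real.exp (-(lam * u))) + G u) (Ioc 0 2) :=
    (hHIoc.const_mul E).add hGint
  have h1 : ∫ u in Ioc (0:ℝ) 2, F u ≤
      ∫ u in Ioc (0:ℝ) 2, (E * (u ^ (m-1) * Real.exp (-(lam * u))) + G u) := by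
    refine integral_mono_of_nonneg ?_ hgint ?_
    · exact (ae_restrict_iff' measurableSet_Ioc).2 (ae_of_all _ hF0)
    · exact (ae_restrict_iff' measurableSet_Ioc).2 (ae_of_all _ hFG)
  have h2 : ∫ u in Ioc (0:ℝ) 2, (E * (u ^ (m-1) * Real.exp (-(lam * u))) + G u)
      = E * (∫ u in Ioc (0:ℝ) 2, u ^ (m-1) * Real.exp (-(lam * u)))
        + ∫ u in Ioc (0:ℝ) 2, G u := by
    rw [integral_add (hHIoc.const_mul E) hGint, integral_const_mul]
  have h3 : (∫ u in Ioc (0:ℝ) 2, u ^ (m-1) * Real.exp (-(lam * u)))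
      ≤ lam ^ (-m) * Real.Gamma m := by
    rw [← hHval]
    refine setIntegral_mono_set hHint ?_ (HasSubset.Subset.eventuallyLE Ioc_subset_Ioi_self)
    refine (ae_restrict_iff' measurableSet_Ioi).2 (ae_of_all _ fun u hu => ?_)
    have hu0 : (0:ℝ) < u := hu
    positivity
  calc ∫ u in Ioc (0:ℝ) 2, F u ≤ _ := h1
    _ = _ := h2
    _ ≤ E * (lam ^ (-m) * Real.Gamma m) + R :=
        add_le_add (mul_le_mul_of_nonneg_left h3 hE) hGle

lemma aux_inner_large (t w x : ℝ) (ht : 0 ≤ t) (hw : 0 ≤ w) (hx : -1 < x) :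
    ∫ u in Ioc (0:ℝ) 2, Real.exp (-2*t*u) * (2-u) ^ w * u ^ x ≤
      (Real.exp 1 * 2 ^ w * Real.Gamma (x+1)) * (2*t + (w+1)/2) ^ (-(x+1)) := by
  set lam : ℝ := 2*t + (w+1)/2 with hlam
  have hl : 0 < lam := by rw [hlam]; positivity
  have key := aux_inner_core (x+1) lam (Real.exp 1 * 2 ^ w) 0 (by linarith) hl
    (by positivity)
    (fun u => Real.exp (-2*t*u) * (2-u) ^ w * u ^ x) (fun _ => 0)
    (fun u hu => by
      have h1 : 0 ≤ 2 - u := by linarith [hu.2]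
      have h2 : 0 < u := hu.1
      positivity)
    (fun u hu => ?_) (integrableOn_zero) (by simp)
  · calc ∫ u in Ioc (0:ℝ) 2, Real.exp (-2*t*u) * (2-u) ^ w * u ^ x
        ≤ Real.exp 1 * 2 ^ w * (lam ^ (-(x+1)) * Real.Gamma (x+1)) + 0 := key
      _ = (Real.exp 1 * 2 ^ w * Real.Gamma (x+1)) * lam ^ (-(x+1)) := by ring
  · -- pointwise bound
    obtain ⟨hu0, hu2⟩ := hu
    rw [add_zero, show x + 1 - 1 = x by ring]
    have h1 : (2:ℝ) - u ≤ 2 * Real.exp (-(u/2)) := by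
      have := Real.add_one_le_exp (-(u/2)); linarith
    have h2 : ((2:ℝ) - u) ^ w ≤ (2 * Real.exp (-(u/2))) ^ w :=
      Real.rpow_le_rpow (by linarith) h1 hw
    have h3 : ((2:ℝ) * Real.exp (-(u/2))) ^ w = 2 ^ w * Real.exp (-(u/2) * w) := by
      rw [Real.mul_rpow (by norm_num) (Real.exp_nonneg _), ← Real.exp_mul]
    have h4 : Real.exp (-(u/2) * w) ≤ Real.exp 1 * Real.exp (-((w+1)/2 * u)) := by
      rw [← Real.exp_add]
      refine Real.exp_le_exp.mpr ?_
      nlinarith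
    have h5 : Real.exp (-2*t*u) * Real.exp (-((w+1)/2 * u)) = Real.exp (-(lam * u)) := by
      rw [← Real.exp_add]; congr 1; rw [hlam]; ring
    have hu0' : (0:ℝ) ≤ u ^ x := Real.rpow_nonneg hu0.le x
    calc Real.exp (-2*t*u) * (2-u) ^ w * u ^ x
        ≤ Real.exp (-2*t*u) * (2 ^ w * (Real.exp 1 * Real.exp (-((w+1)/2 * u)))) * u ^ x := by
          refine mul_le_mul_of_nonneg_right (mul_le_mul_of_nonneg_left ?_
            (Real.exp_nonneg _)) hu0'
          calc ((2:ℝ) - u) ^ w ≤ 2 ^ w * Real.exp (-(u/2) * w) := h2.trans_eq h3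
            _ ≤ 2 ^ w * (Real.exp 1 * Real.exp (-((w+1)/2 * u))) :=
                mul_le_mul_of_nonneg_left h4 (Real.rpow_nonneg (by norm_num) _)
      _ = Real.exp 1 * 2 ^ w * (u ^ x * (Real.exp (-2*t*u) * Real.exp (-((w+1)/2 * u)))) := by
          ring
      _ = Real.exp 1 * 2 ^ w * (u ^ x * Real.exp (-(lam * u))) := by rw [h5]

lemma aux_inner_small (t w x : ℝ) (ht : 0 ≤ t) (hw1 : -1 < w) (hw0 : w ≤ 0) (hx : -1 < x) :
    ∫ u in Ioc (0:ℝ) 2, Real.exp (-2*t*u) * (2-u) ^ w * u ^ x ≤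
      (Real.exp (1/2) * Real.Gamma (x+1)
        + (1 + (Nat.ceil (x+1)).factorial) * Real.exp ((w+1)/2) * max 1 (2 ^ x)
          * (2 ^ (w+1) / (w+1)))
        * (2*t + (w+1)/2) ^ (-(x+1)) := by
  set lam : ℝ := 2*t + (w+1)/2 with hlam
  have hw1' : (0:ℝ) < w + 1 := by linarith
  have hl : 0 < lam := by rw [hlam]; positivity
  set Bx : ℝ := max 1 (2 ^ x) with hBx
  have hBx0 : (0:ℝ) < Bx := lt_of_lt_of_le one_pos (le_max_left _ _)
  set Q : ℝ := 2 ^ (w+1) / (w+1) with hQ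
  have hQ0 : (0:ℝ) < Q := by rw [hQ]; positivity
  set G : ℝ → ℝ := fun u => (Real.exp (-2*t) * Bx) * (2-u) ^ w with hG
  have hGint : IntegrableOn G (Ioc 0 2) := by
    have hii : IntervalIntegrable (fun v : ℝ => v ^ w) volume 0 2 :=
      intervalIntegral.intervalIntegrable_rpow' hw1
    have hii2 : IntervalIntegrable (fun u : ℝ => (2 - u) ^ w) volume 0 2 := by
      have h := (hii.comp_sub_left 2).symm
      simpa using h
    exact (((intervalIntegrable_iff_integrableOn_Ioc_of_le
      (by norm_num : (0:ℝ) ≤ 2)).mp hii2).const_mul _)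
  have hGval : ∫ u in Ioc (0:ℝ) 2, G u = (Real.exp (-2*t) * Bx) * Q := by
    rw [hG]
    rw [integral_const_mul]
    congr 1
    have h1 : ∫ u in Ioc (0:ℝ) 2, (2 - u) ^ w = ∫ u in (0:ℝ)..2, (2-u) ^ w :=
      (intervalIntegral.integral_of_le (by norm_num : (0:ℝ) ≤ 2)).symm
    have h2 : (∫ u in (0:ℝ)..2, (fun v : ℝ => v ^ w) (2-u))
        = ∫ v in ((2:ℝ)-2)..((2:ℝ)-0), v ^ w :=
      intervalIntegral.integral_comp_sub_left (fun v : ℝ => v ^ w) 2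
    rw [h1]
    calc (∫ u in (0:ℝ)..2, (2-u) ^ w) = ∫ v in ((2:ℝ)-2)..((2:ℝ)-0), v ^ w := h2
      _ = ∫ v in (0:ℝ)..2, v ^ w := by norm_num
      _ = Q := by
          rw [integral_rpow (Or.inl hw1), Real.zero_rpow (by linarith : w + 1 ≠ 0), sub_zero,
            hQ]
  have key := aux_inner_core (x+1) lam (Real.exp (1/2)) ((Real.exp (-2*t) * Bx) * Q)
    (by linarith) hl (Real.exp_nonneg _)
    (fun u => Real.exp (-2*t*u) * (2-u) ^ w * u ^ x) G
    (fun u hu => by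
      have h1 : 0 ≤ 2 - u := by linarith [hu.2]
      have h2 : 0 < u := hu.1
      positivity)
    (fun u hu => ?_) hGint (le_of_eq hGval)
  · -- conclude
    set N : ℝ := 1 + (Nat.ceil (x+1)).factorial with hN
    have hN0 : (0:ℝ) < N := by rw [hN]; positivity
    have hconv : Real.exp (-2*t) ≤ N * Real.exp ((w+1)/2) * lam ^ (-(x+1)) := by
      have hkey := aux_rpow_mul_exp_neg_le (s := x+1) (z := lam) (by linarith) hl
      have hlp : (0:ℝ) < lam ^ (x+1) := Real.rpow_pos_of_pos hl _
      have hsplit : Real.exp (-2*t) = Real.exp ((w+1)/2) * Real.exp (-lam) := by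
        rw [← Real.exp_add]; congr 1; rw [hlam]; ring
      have hle : Real.exp (-lam) ≤ N * lam ^ (-(x+1)) := by
        rw [Real.rpow_neg hl.le, ← div_eq_mul_inv, le_div_iff₀ hlp]
        calc Real.exp (-lam) * lam ^ (x+1) = lam ^ (x+1) * Real.exp (-lam) := by ring
          _ ≤ N := by rw [hN]; exact hkey
      calc Real.exp (-2*t) = Real.exp ((w+1)/2) * Real.exp (-lam) := hsplit
        _ ≤ Real.exp ((w+1)/2) * (N * lam ^ (-(x+1))) :=
            mul_le_mul_of_nonneg_left hle (Real.exp_nonneg _)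
        _ = N * Real.exp ((w+1)/2) * lam ^ (-(x+1)) := by ring
    refine key.trans ?_
    have hBQ : (0:ℝ) ≤ Bx * Q := by positivity
    have h6 : Real.exp (-2*t) * Bx * Q ≤
        (N * Real.exp ((w+1)/2) * lam ^ (-(x+1))) * (Bx * Q) := by
      calc Real.exp (-2*t) * Bx * Q = Real.exp (-2*t) * (Bx * Q) := by ring
        _ ≤ (N * Real.exp ((w+1)/2) * lam ^ (-(x+1))) * (Bx * Q) :=
            mul_le_mul_of_nonneg_right hconv hBQ
    calc Real.exp (1/2) * (lam ^ (-(x+1)) * Real.Gamma (x+1)) + Real.exp (-2*t) * Bx * Q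
        ≤ Real.exp (1/2) * (lam ^ (-(x+1)) * Real.Gamma (x+1))
          + (N * Real.exp ((w+1)/2) * lam ^ (-(x+1))) * (Bx * Q) := by linarith
      _ = (Real.exp (1/2) * Real.Gamma (x+1) + N * Real.exp ((w+1)/2) * Bx * Q)
            * lam ^ (-(x+1)) := by ring
      _ = (Real.exp (1/2) * Real.Gamma (x+1)
          + (1 + (Nat.ceil (x+1)).factorial) * Real.exp ((w+1)/2) * max 1 (2 ^ x)
            * (2 ^ (w+1) / (w+1))) * lam ^ (-(x+1)) := by rw [← hN, ← hBx, ← hQ]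
  · -- pointwise bound
    obtain ⟨hu0, hu2⟩ := hu
    rw [show x + 1 - 1 = x by ring]
    rcases le_or_gt u 1 with hu1 | hu1
    · have h2mu : (0:ℝ) ≤ 2 - u := by linarith
      have hG0 : 0 ≤ G u := by rw [hG]; positivity
      have h2w : ((2:ℝ) - u) ^ w ≤ 1 :=
        Real.rpow_le_one_of_one_le_of_nonpos (by linarith) hw0
      have hxnn : (0:ℝ) ≤ u ^ x := Real.rpow_nonneg hu0.le x
      have hexp : Real.exp (-2*t*u) ≤ Real.exp (1/2) * Real.exp (-(lam*u)) := by
        rw [← Real.exp_add]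
        refine Real.exp_le_exp.mpr ?_
        rw [hlam]
        nlinarith
      have hmain : Real.exp (-2*t*u) * (2-u) ^ w * u ^ x ≤
          Real.exp (1/2) * (u ^ x * Real.exp (-(lam*u))) := by
        calc Real.exp (-2*t*u) * (2-u) ^ w * u ^ x
            ≤ Real.exp (-2*t*u) * 1 * u ^ x :=
              mul_le_mul_of_nonneg_right
                (mul_le_mul_of_nonneg_left h2w (Real.exp_nonneg _)) hxnn
          _ = Real.exp (-2*t*u) * u ^ x := by ring
          _ ≤ (Real.exp (1/2) * Real.exp (-(lam*u))) * u ^ x :=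
              mul_le_mul_of_nonneg_right hexp hxnn
          _ = Real.exp (1/2) * (u ^ x * Real.exp (-(lam*u))) := by ring
      linarith
    · have h2mu : (0:ℝ) ≤ 2 - u := by linarith
      have hEH : 0 ≤ Real.exp (1/2) * (u ^ x * Real.exp (-(lam*u))) := by positivity
      have hub : u ^ x ≤ Bx := by
        rcases le_or_gt 0 x with hx0 | hx0
        · exact le_trans (Real.rpow_le_rpow hu0.le hu2 hx0) (le_max_right _ _)
        · exact le_trans (Real.rpow_le_one_of_one_le_of_nonpos hu1.le hx0.le)
            (le_max_left _ _)
      have hexp : Real.exp (-2*t*u) ≤ Real.exp (-2*t) := Real.exp_le_exp.mpr (by nlinarith)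
      have h2w0 : (0:ℝ) ≤ (2-u) ^ w := Real.rpow_nonneg h2mu w
      have hFG' : Real.exp (-2*t*u) * (2-u) ^ w * u ^ x ≤ G u := by
        rw [hG]
        calc Real.exp (-2*t*u) * (2-u) ^ w * u ^ x
            ≤ Real.exp (-2*t) * (2-u) ^ w * Bx := by
              refine mul_le_mul (mul_le_mul hexp (le_refl _) h2w0 (Real.exp_nonneg _))
                hub (Real.rpow_nonneg hu0.le x) (by positivity)
          _ = Real.exp (-2*t) * Bx * (2-u) ^ w := by ring
      linarith

lemma aux_outer (p δ c D S m : ℝ) (I : ℝ → ℝ) (hm : 2*m = p+δ)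
    (hc : 0 < c) (hD : 0 ≤ D)
    (hI0 : ∀ t ∈ Ioi (0:ℝ), 0 ≤ I t)
    (hIle : ∀ t ∈ Ioi (0:ℝ), I t ≤ D * (2*t+c) ^ (-m))
    (hint : IntegrableOn (fun t : ℝ => t ^ (p-1) * (2*t+c) ^ (-(p+δ))) (Ioi 0))
    (hS : ∫ t in Ioi (0:ℝ), t ^ (p-1) * (2*t+c) ^ (-(p+δ)) ≤ S) :
    (∫ t in Ioi (0:ℝ), t ^ (p-1) * (I t) ^ 2) ^ ((1:ℝ)/2) ≤ D * S ^ ((1:ℝ)/2) := by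
  have hS0 : 0 ≤ S := le_trans (setIntegral_nonneg measurableSet_Ioi
    (fun t ht => aux_phi_nonneg p δ c hc ht)) hS
  have hpoint : ∀ t ∈ Ioi (0:ℝ), t ^ (p-1) * (I t) ^ 2 ≤
      D ^ 2 * (t ^ (p-1) * (2*t+c) ^ (-(p+δ))) := by
    intro t ht
    have ht0 : (0:ℝ) < t := ht
    have hlam : (0:ℝ) < 2*t+c := by positivity
    have h1 : (I t) ^ 2 ≤ (D * (2*t+c) ^ (-m)) ^ 2 :=
      pow_le_pow_left₀ (hI0 t ht) (hIle t ht) 2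
    have h2 : (D * (2*t+c) ^ (-m)) ^ 2 = D ^ 2 * (2*t+c) ^ (-(p+δ)) := by
      rw [mul_pow, sq ((2*t+c) ^ (-m)), ← Real.rpow_add hlam,
        show -m + -m = -(p+δ) by linarith]
    calc t ^ (p-1) * (I t) ^ 2 ≤ t ^ (p-1) * (D ^ 2 * (2*t+c) ^ (-(p+δ))) := by
          refine mul_le_mul_of_nonneg_left (h1.trans_eq h2) (Real.rpow_nonneg ht0.le _)
      _ = D ^ 2 * (t ^ (p-1) * (2*t+c) ^ (-(p+δ))) := by ring
  have h3 : ∫ t in Ioi (0:ℝ), t ^ (p-1) * (I t) ^ 2 ≤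
      ∫ t in Ioi (0:ℝ), D ^ 2 * (t ^ (p-1) * (2*t+c) ^ (-(p+δ))) := by
    refine integral_mono_of_nonneg ?_ (hint.const_mul _) ?_
    · refine (ae_restrict_iff' measurableSet_Ioi).2 (ae_of_all _ fun t ht => ?_)
      have ht0 : (0:ℝ) < t := ht
      positivity
    · exact (ae_restrict_iff' measurableSet_Ioi).2 (ae_of_all _ hpoint)
  have h4 : ∫ t in Ioi (0:ℝ), D ^ 2 * (t ^ (p-1) * (2*t+c) ^ (-(p+δ))) ≤ D ^ 2 * S := by
    rw [integral_const_mul]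
    exact mul_le_mul_of_nonneg_left hS (sq_nonneg D)
  have h5 : (0:ℝ) ≤ ∫ t in Ioi (0:ℝ), t ^ (p-1) * (I t) ^ 2 := by
    refine setIntegral_nonneg measurableSet_Ioi fun t ht => ?_
    have ht0 : (0:ℝ) < t := ht
    positivity
  calc (∫ t in Ioi (0:ℝ), t ^ (p-1) * (I t) ^ 2) ^ ((1:ℝ)/2)
      ≤ (D ^ 2 * S) ^ ((1:ℝ)/2) := Real.rpow_le_rpow h5 (h3.trans h4) (by norm_num)
    _ = D * S ^ ((1:ℝ)/2) := by
        rw [Real.mul_rpow (sq_nonneg D) hS0]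
        congr 1
        rw [← Real.rpow_natCast D 2, ← Real.rpow_mul hD]
        norm_num

lemma aux_S_eq (P A d Cv : ℝ) (hA : 0 < A) (hd : 0 < d) :
    ((1/2) ^ (P-1) * Cv * A ^ (-(1+d))) * (A/2) + 2 ^ (-(P+d)) * ((A/2) ^ (-d) / d)
      = 2 ^ (-P) * A ^ (-d) * (Cv + 1/d) := by
  have h2 : ((1:ℝ)/2) ^ (P-1) = 2 ^ (-(P-1)) := by
    rw [one_div, Real.inv_rpow (by norm_num : (0:ℝ) ≤ 2), ← Real.rpow_neg (by norm_num)]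
  have hAd2 : (A/2) ^ (-d) = A ^ (-d) * 2 ^ d := by
    rw [Real.div_rpow hA.le (by norm_num), Real.rpow_neg (by norm_num : (0:ℝ) ≤ 2),
      div_eq_mul_inv, inv_inv]
  rw [h2, hAd2]
  have e1 : 2 ^ (-(P-1)) * Cv * A ^ (-(1+d)) * (A/2) = 2 ^ (-P) * A ^ (-d) * Cv := by
    have h3 : (2:ℝ) ^ (-(P-1)) * 2⁻¹ = 2 ^ (-P) := by
      rw [← Real.rpow_neg_one (2:ℝ), ← Real.rpow_add (by norm_num : (0:ℝ) < 2),
        show -(P-1) + -1 = -P by ring]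
    have h4 : A ^ (-(1+d)) * A ^ (1:ℝ) = A ^ (-d) := by
      rw [← Real.rpow_add hA, show -(1+d) + 1 = -d by ring]
    calc 2 ^ (-(P-1)) * Cv * A ^ (-(1+d)) * (A/2)
        = (2 ^ (-(P-1)) * 2⁻¹) * Cv * (A ^ (-(1+d)) * A ^ (1:ℝ)) := by
          rw [Real.rpow_one]; ring
      _ = 2 ^ (-P) * Cv * A ^ (-d) := by rw [h3, h4]
      _ = 2 ^ (-P) * A ^ (-d) * Cv := by ring
  have e2 : (2:ℝ) ^ (-(P+d)) * (A ^ (-d) * 2 ^ d / d) = 2 ^ (-P) * A ^ (-d) * (1/d) := by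
    have h5 : (2:ℝ) ^ (-(P+d)) * 2 ^ d = 2 ^ (-P) := by
      rw [← Real.rpow_add (by norm_num : (0:ℝ) < 2), show -(P+d) + d = -P by ring]
    calc (2:ℝ) ^ (-(P+d)) * (A ^ (-d) * 2 ^ d / d)
        = (2 ^ (-(P+d)) * 2 ^ d) * A ^ (-d) * (1/d) := by ring
      _ = 2 ^ (-P) * A ^ (-d) * (1/d) := by rw [h5]
  linear_combination e1 + e2

lemma aux_S_sqrt (P A d Cs : ℝ) (hA : 0 < A) (hC : 0 ≤ Cs) :
    (2 ^ (-P) * A ^ (-d) * Cs) ^ ((1:ℝ)/2)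
      = 2 ^ (-(P/2)) * A ^ (-(d/2)) * Cs ^ ((1:ℝ)/2) := by
  have h1 : (0:ℝ) ≤ 2 ^ (-P) := Real.rpow_nonneg (by norm_num) _
  have h2 : (0:ℝ) ≤ A ^ (-d) := Real.rpow_nonneg hA.le _
  rw [Real.mul_rpow (mul_nonneg h1 h2) hC, Real.mul_rpow h1 h2,
    ← Real.rpow_mul (by norm_num : (0:ℝ) ≤ 2), ← Real.rpow_mul hA.le,
    show -P * ((1:ℝ)/2) = -(P/2) by ring, show -d * ((1:ℝ)/2) = -(d/2) by ring]

lemma aux_A_bound (B A d : ℝ) (hB : 0 < B) (hA : B*B/8 ≤ A) (hd : 0 < d) :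
    A ^ (-(d/2)) ≤ B ^ (-d) * 8 ^ (d/2) := by
  have h0 : (0:ℝ) < B*B/8 := by positivity
  have h1 : A ^ (-(d/2)) ≤ (B*B/8) ^ (-(d/2)) :=
    Real.rpow_le_rpow_of_nonpos h0 hA (by linarith)
  refine h1.trans_eq ?_
  rw [Real.div_rpow (by positivity) (by norm_num),
    show (B*B) = B ^ (2:ℝ) by
      rw [show (2:ℝ) = ((2:ℕ):ℝ) by norm_num, Real.rpow_natCast]; ring,
    ← Real.rpow_mul hB.le, show (2:ℝ) * -(d/2) = -d by ring,
    Real.rpow_neg (by norm_num : (0:ℝ) ≤ 8), div_eq_mul_inv, inv_inv]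

theorem technical_L2_integral_bound (a α β : ℝ) :
    ∃ C : ℝ, 0 < C ∧ ∀ k : ℕ,
      (k : ℝ) + 2 * a > β + 1 → β + 1 > a → (k : ℝ) + β + 1 > 0 → (k : ℝ) + α + 1 > 0 →
      (∫ t in Set.Ioi (0 : ℝ), t ^ (2 * (k : ℝ) + 2 * a - 1) *
          (∫ s in (-1 : ℝ)..1,
            Real.exp (-2 * t * (1 + s)) * (1 - s) ^ ((k : ℝ) + α) * (1 + s) ^ ((k : ℝ) + β)) ^ 2)
        ^ ((1 : ℝ) / 2)
        ≤ C * Real.Gamma ((k : ℝ) + 1) / ((k : ℝ) + 1) ^ (β - 2 * a + 2) := by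
  set d : ℝ := 2*β+2-2*a with hd
  set Cs : ℝ := (1 + ((Nat.ceil (1+d)).factorial : ℝ)) + 1/d with hCs
  set Cβv : ℝ := 2 ^ (|β| + 1) + (1 + |β|) ^ |β| with hCβv
  set Cmain : ℝ := Real.exp 1 * 2 ^ (α-a) * 8 ^ (d/2) * Cs ^ ((1:ℝ)/2) * Cβv with hCmain
  set K₀ : ℕ := Nat.ceil (1 + 2*|a| + 2*|α| + 2*|β|) + 1 with hK₀
  set E : ℕ → ℝ := fun j =>
    ((Real.exp 1 * 2 ^ ((j:ℝ)+α) * Real.Gamma ((j:ℝ)+β+1)) +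
     (Real.exp (1/2) * Real.Gamma ((j:ℝ)+β+1)
       + (1 + ((Nat.ceil ((j:ℝ)+β+1)).factorial : ℝ)) * Real.exp (((j:ℝ)+α+1)/2)
         * max 1 (2 ^ ((j:ℝ)+β)) * (2 ^ ((j:ℝ)+α+1) / ((j:ℝ)+α+1)))) *
    ((((j:ℝ)+α+1)/2) ^ (-d) / (2*(j:ℝ)+2*a)
      + 2 ^ (-((2*(j:ℝ)+2*a)+d)) * ((((j:ℝ)+α+1)/2) ^ (-d) / d)) ^ ((1:ℝ)/2) with hE
  refine ⟨|Cmain| + 1 + ∑ j ∈ Finset.range K₀,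
    |E j| * ((j:ℝ)+1) ^ (β-2*a+2) / Real.Gamma ((j:ℝ)+1), ?_, ?_⟩
  · have hsum : 0 ≤ ∑ j ∈ Finset.range K₀,
        |E j| * ((j:ℝ)+1) ^ (β-2*a+2) / Real.Gamma ((j:ℝ)+1) := by
      refine Finset.sum_nonneg fun j _ => ?_
      have hΓ : 0 < Real.Gamma ((j:ℝ)+1) := Real.Gamma_pos_of_pos (by positivity)
      have hr : (0:ℝ) ≤ ((j:ℝ)+1) ^ (β-2*a+2) := Real.rpow_nonneg (by positivity) _
      positivity
    have habs : (0:ℝ) ≤ |Cmain| := abs_nonneg _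
    linarith
  · intro k h1 h2 h3 h4
    set C : ℝ := |Cmain| + 1 + ∑ j ∈ Finset.range K₀,
      |E j| * ((j:ℝ)+1) ^ (β-2*a+2) / Real.Gamma ((j:ℝ)+1) with hC
    -- basic positivity facts
    have hd0 : 0 < d := by rw [hd]; linarith
    have hc0 : (0:ℝ) < ((k:ℝ)+α+1)/2 := by linarith
    have hm0 : (0:ℝ) < (k:ℝ)+β+1 := h3
    have hkn : (0:ℝ) ≤ (k:ℝ) := Nat.cast_nonneg k
    have hp0 : (0:ℝ) < 2*(k:ℝ)+2*a := by linarith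
    have hx1 : (-1:ℝ) < (k:ℝ)+β := by linarith
    have hw1 : (-1:ℝ) < (k:ℝ)+α := by linarith
    have hmpd : 2*((k:ℝ)+β+1) = (2*(k:ℝ)+2*a) + d := by rw [hd]; ring
    have hΓm : 0 < Real.Gamma ((k:ℝ)+β+1) := Real.Gamma_pos_of_pos hm0
    have hΓk1 : 0 < Real.Gamma ((k:ℝ)+1) := Real.Gamma_pos_of_pos (by positivity)
    have hB0 : (0:ℝ) < (k:ℝ)+1 := by positivity
    have hCs0 : (0:ℝ) < Cs := by
      rw [hCs]
      have : (0:ℝ) < 1/d := by positivity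
      positivity
    have hrexp : (0:ℝ) < ((k:ℝ)+1) ^ (β-2*a+2) := Real.rpow_pos_of_pos hB0 _
    -- rewrite the RHS
    have hRHS : C * Real.Gamma ((k:ℝ)+1) / ((k:ℝ)+1) ^ (β-2*a+2)
        = C * Real.Gamma ((k:ℝ)+1) * ((k:ℝ)+1) ^ (-(β-2*a+2)) := by
      rw [Real.rpow_neg hB0.le, div_eq_mul_inv]
    rw [hRHS]
    -- nonnegativity of inner integral
    have hI0 : ∀ t ∈ Ioi (0:ℝ), 0 ≤ (fun t : ℝ => ∫ s in (-1:ℝ)..1,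
        Real.exp (-2*t*(1+s)) * (1-s) ^ ((k:ℝ)+α) * (1+s) ^ ((k:ℝ)+β)) t :=
      fun t _ => aux_inner_nonneg t _ _
    by_cases hbig : (1:ℝ) + 2*|a| + 2*|α| + 2*|β| + 1 ≤ (k:ℝ)
    · -- MAIN branch : k large
      have haa := le_abs_self a; have haa' := neg_abs_le a
      have hαα := le_abs_self α; have hαα' := neg_abs_le α
      have hββ := le_abs_self β; have hββ' := neg_abs_le β
      have hw0 : (0:ℝ) ≤ (k:ℝ)+α := by linarith
      have hp1 : (1:ℝ) < 2*(k:ℝ)+2*a := by linarith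
      have hpm1 : ((k:ℝ)+1)/2 ≤ (2*(k:ℝ)+2*a) - 1 := by linarith
      have hcge : ((k:ℝ)+1)/4 ≤ ((k:ℝ)+α+1)/2 := by linarith
      have hAge : ((k:ℝ)+1)*((k:ℝ)+1)/8 ≤ ((2*(k:ℝ)+2*a)-1) * (((k:ℝ)+α+1)/2) := by
        have := mul_le_mul hpm1 hcge (by positivity) (by linarith)
        calc ((k:ℝ)+1)*((k:ℝ)+1)/8 = (((k:ℝ)+1)/2) * (((k:ℝ)+1)/4) := by ring
          _ ≤ _ := this
      have hA0 : (0:ℝ) < ((2*(k:ℝ)+2*a)-1) * (((k:ℝ)+α+1)/2) :=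
        lt_of_lt_of_le (by positivity) hAge
      -- inner bound
      have hIle : ∀ t ∈ Ioi (0:ℝ), (fun t : ℝ => ∫ s in (-1:ℝ)..1,
          Real.exp (-2*t*(1+s)) * (1-s) ^ ((k:ℝ)+α) * (1+s) ^ ((k:ℝ)+β)) t ≤
          (Real.exp 1 * 2 ^ ((k:ℝ)+α) * Real.Gamma ((k:ℝ)+β+1)) *
            (2*t + ((k:ℝ)+α+1)/2) ^ (-((k:ℝ)+β+1)) := by
        intro t ht
        have ht0 : (0:ℝ) < t := ht
        have hcomp := aux_inner_large t ((k:ℝ)+α) ((k:ℝ)+β) ht0.le hw0 hx1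
        show (∫ s in (-1:ℝ)..1, Real.exp (-2*t*(1+s)) * (1-s) ^ ((k:ℝ)+α)
          * (1+s) ^ ((k:ℝ)+β)) ≤ _
        rw [aux_inner_eq t ((k:ℝ)+α) ((k:ℝ)+β)]
        exact hcomp
      -- K bound
      obtain ⟨hhint, hhle⟩ := aux_head_large (2*(k:ℝ)+2*a) d (((k:ℝ)+α+1)/2) hp1 hd0 hc0
      obtain ⟨hint, hS⟩ := aux_K (2*(k:ℝ)+2*a) d (((k:ℝ)+α+1)/2)
        (((2*(k:ℝ)+2*a)-1) * (((k:ℝ)+α+1)/2) / 2) _ hp0 hd0 hc0 (by positivity) hhint hhle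
      have main := aux_outer (2*(k:ℝ)+2*a) d (((k:ℝ)+α+1)/2)
        (Real.exp 1 * 2 ^ ((k:ℝ)+α) * Real.Gamma ((k:ℝ)+β+1)) _ ((k:ℝ)+β+1)
        (fun t : ℝ => ∫ s in (-1:ℝ)..1,
          Real.exp (-2*t*(1+s)) * (1-s) ^ ((k:ℝ)+α) * (1+s) ^ ((k:ℝ)+β))
        hmpd hc0 (by positivity) hI0 hIle hint hS
      refine le_trans main ?_
      -- now the arithmetic
      have hSeq := aux_S_eq (2*(k:ℝ)+2*a) (((2*(k:ℝ)+2*a)-1) * (((k:ℝ)+α+1)/2)) d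
        (1 + ((Nat.ceil (1+d)).factorial : ℝ)) hA0 hd0
      rw [hSeq, aux_S_sqrt _ _ _ _ hA0 (by positivity)]
      have hAb := aux_A_bound ((k:ℝ)+1) (((2*(k:ℝ)+2*a)-1) * (((k:ℝ)+α+1)/2)) d hB0 hAge hd0
      have hG := aux_gautschi β k (by linarith)
      -- collect
      have h2w : (0:ℝ) < 2 ^ ((k:ℝ)+α) := Real.rpow_pos_of_pos (by norm_num) _
      have h2p : (0:ℝ) < 2 ^ (-((2*(k:ℝ)+2*a)/2)) := Real.rpow_pos_of_pos (by norm_num) _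
      have hCsr : (0:ℝ) < ((1 + ((Nat.ceil (1+d)).factorial : ℝ)) + 1/d) ^ ((1:ℝ)/2) := by
        refine Real.rpow_pos_of_pos ?_ _
        have : (0:ℝ) < 1/d := by positivity
        positivity
      have h8 : (0:ℝ) < 8 ^ (d/2) := Real.rpow_pos_of_pos (by norm_num) _
      have hexp2 : (2:ℝ) ^ ((k:ℝ)+α) * 2 ^ (-((2*(k:ℝ)+2*a)/2)) = 2 ^ (α-a) := by
        rw [← Real.rpow_add (by norm_num : (0:ℝ) < 2)]
        congr 1; ring
      have hpows : ((k:ℝ)+1) ^ β * ((k:ℝ)+1) ^ (-d) = ((k:ℝ)+1) ^ (-(β-2*a+2)) := by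
        rw [← Real.rpow_add hB0]
        congr 1; rw [hd]; ring
      calc (Real.exp 1 * 2 ^ ((k:ℝ)+α) * Real.Gamma ((k:ℝ)+β+1)) *
            (2 ^ (-((2*(k:ℝ)+2*a)/2)) *
              (((2*(k:ℝ)+2*a)-1) * (((k:ℝ)+α+1)/2)) ^ (-(d/2)) *
              ((1 + ((Nat.ceil (1+d)).factorial : ℝ)) + 1/d) ^ ((1:ℝ)/2))
          ≤ (Real.exp 1 * 2 ^ ((k:ℝ)+α) * Real.Gamma ((k:ℝ)+β+1)) *
            (2 ^ (-((2*(k:ℝ)+2*a)/2)) * (((k:ℝ)+1) ^ (-d) * 8 ^ (d/2)) *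
              ((1 + ((Nat.ceil (1+d)).factorial : ℝ)) + 1/d) ^ ((1:ℝ)/2)) := by
            refine mul_le_mul_of_nonneg_left ?_ (by positivity)
            refine mul_le_mul_of_nonneg_right
              (mul_le_mul_of_nonneg_left hAb h2p.le) hCsr.le
        _ = Real.exp 1 * (2 ^ ((k:ℝ)+α) * 2 ^ (-((2*(k:ℝ)+2*a)/2))) *
              Real.Gamma ((k:ℝ)+β+1) * 8 ^ (d/2) *
              ((1 + ((Nat.ceil (1+d)).factorial : ℝ)) + 1/d) ^ ((1:ℝ)/2) *
              ((k:ℝ)+1) ^ (-d) := by ring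
        _ = Real.exp 1 * 2 ^ (α-a) * Real.Gamma ((k:ℝ)+β+1) * 8 ^ (d/2) *
              Cs ^ ((1:ℝ)/2) * ((k:ℝ)+1) ^ (-d) := by rw [hexp2, ← hCs]
        _ ≤ Real.exp 1 * 2 ^ (α-a) * (Cβv * ((k:ℝ)+1) ^ β * Real.Gamma ((k:ℝ)+1)) *
              8 ^ (d/2) * Cs ^ ((1:ℝ)/2) * ((k:ℝ)+1) ^ (-d) := by
            rw [← hCβv] at hG
            have hfac : (0:ℝ) ≤ Real.exp 1 * 2 ^ (α-a) := by positivity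
            have h2 : (0:ℝ) ≤ 8 ^ (d/2) * Cs ^ ((1:ℝ)/2) * ((k:ℝ)+1) ^ (-d) := by
              have := Real.rpow_nonneg hB0.le (-d)
              have hcs2 : (0:ℝ) ≤ Cs ^ ((1:ℝ)/2) := Real.rpow_nonneg hCs0.le _
              positivity
            calc Real.exp 1 * 2 ^ (α-a) * Real.Gamma ((k:ℝ)+β+1) * 8 ^ (d/2) *
                  Cs ^ ((1:ℝ)/2) * ((k:ℝ)+1) ^ (-d)
                = (Real.Gamma ((k:ℝ)+β+1)) * (Real.exp 1 * 2 ^ (α-a) *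
                    (8 ^ (d/2) * Cs ^ ((1:ℝ)/2) * ((k:ℝ)+1) ^ (-d))) := by ring
              _ ≤ (Cβv * ((k:ℝ)+1) ^ β * Real.Gamma ((k:ℝ)+1)) * (Real.exp 1 * 2 ^ (α-a) *
                    (8 ^ (d/2) * Cs ^ ((1:ℝ)/2) * ((k:ℝ)+1) ^ (-d))) :=
                  mul_le_mul_of_nonneg_right hG (mul_nonneg hfac h2)
              _ = Real.exp 1 * 2 ^ (α-a) * (Cβv * ((k:ℝ)+1) ^ β * Real.Gamma ((k:ℝ)+1)) *
                    8 ^ (d/2) * Cs ^ ((1:ℝ)/2) * ((k:ℝ)+1) ^ (-d) := by ring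
        _ = Cmain * Real.Gamma ((k:ℝ)+1) * (((k:ℝ)+1) ^ β * ((k:ℝ)+1) ^ (-d)) := by
            rw [hCmain]; ring
        _ = Cmain * Real.Gamma ((k:ℝ)+1) * ((k:ℝ)+1) ^ (-(β-2*a+2)) := by rw [hpows]
        _ ≤ C * Real.Gamma ((k:ℝ)+1) * ((k:ℝ)+1) ^ (-(β-2*a+2)) := by
            have hCle : Cmain ≤ C := by
              rw [hC]
              have hsum : 0 ≤ ∑ j ∈ Finset.range K₀,
                  |E j| * ((j:ℝ)+1) ^ (β-2*a+2) / Real.Gamma ((j:ℝ)+1) := by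
                refine Finset.sum_nonneg fun j _ => ?_
                have hΓ : 0 < Real.Gamma ((j:ℝ)+1) := Real.Gamma_pos_of_pos (by positivity)
                have hr : (0:ℝ) ≤ ((j:ℝ)+1) ^ (β-2*a+2) := Real.rpow_nonneg (by positivity) _
                positivity
              have := le_abs_self Cmain
              linarith
            have hpos : (0:ℝ) ≤ Real.Gamma ((k:ℝ)+1) * ((k:ℝ)+1) ^ (-(β-2*a+2)) := by
              have := Real.rpow_nonneg hB0.le (-(β-2*a+2))
              positivity
            calc Cmain * Real.Gamma ((k:ℝ)+1) * ((k:ℝ)+1) ^ (-(β-2*a+2))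
                = Cmain * (Real.Gamma ((k:ℝ)+1) * ((k:ℝ)+1) ^ (-(β-2*a+2))) := by ring
              _ ≤ C * (Real.Gamma ((k:ℝ)+1) * ((k:ℝ)+1) ^ (-(β-2*a+2))) :=
                  mul_le_mul_of_nonneg_right hCle hpos
              _ = C * Real.Gamma ((k:ℝ)+1) * ((k:ℝ)+1) ^ (-(β-2*a+2)) := by ring
    · -- SMALL branch : k < K₀
      have hkK : k < K₀ := by
        by_contra hcon
        push_neg at hcon
        have : (K₀:ℝ) ≤ (k:ℝ) := Nat.cast_le.mpr hcon
        rw [hK₀] at this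
        push_cast at this
        have hceil := Nat.le_ceil (1 + 2*|a| + 2*|α| + 2*|β|)
        exact hbig (by linarith)
      -- common pieces
      obtain ⟨hhint, hhle⟩ := aux_head_small (2*(k:ℝ)+2*a) d (((k:ℝ)+α+1)/2) hp0 hd0 hc0
      obtain ⟨hint, hS⟩ := aux_K (2*(k:ℝ)+2*a) d (((k:ℝ)+α+1)/2)
        (((k:ℝ)+α+1)/2) _ hp0 hd0 hc0 hc0 hhint hhle
      set Ssm : ℝ := (((k:ℝ)+α+1)/2) ^ (-d) / (2*(k:ℝ)+2*a)
        + 2 ^ (-((2*(k:ℝ)+2*a)+d)) * ((((k:ℝ)+α+1)/2) ^ (-d) / d) with hSsm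
      have hSsm0 : (0:ℝ) ≤ Ssm := by
        rw [hSsm]
        have hcr : (0:ℝ) < (((k:ℝ)+α+1)/2) ^ (-d) := Real.rpow_pos_of_pos hc0 _
        positivity
      set Dl : ℝ := Real.exp 1 * 2 ^ ((k:ℝ)+α) * Real.Gamma ((k:ℝ)+β+1) with hDl
      set Ds : ℝ := Real.exp (1/2) * Real.Gamma ((k:ℝ)+β+1)
        + (1 + ((Nat.ceil ((k:ℝ)+β+1)).factorial : ℝ)) * Real.exp (((k:ℝ)+α+1)/2)
          * max 1 (2 ^ ((k:ℝ)+β)) * (2 ^ ((k:ℝ)+α+1) / ((k:ℝ)+α+1)) with hDs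
      have hDl0 : (0:ℝ) ≤ Dl := by
        rw [hDl]; positivity
      have hDs0 : (0:ℝ) ≤ Ds := by
        rw [hDs]
        have hq : (0:ℝ) < 2 ^ ((k:ℝ)+α+1) / ((k:ℝ)+α+1) := by
          refine div_pos (Real.rpow_pos_of_pos (by norm_num) _) (by linarith)
        have hmx : (0:ℝ) ≤ max 1 (2 ^ ((k:ℝ)+β)) := le_trans zero_le_one (le_max_left _ _)
        positivity
      have hLDS : (∫ t in Ioi (0:ℝ), t ^ ((2*(k:ℝ)+2*a)-1) *
          ((fun t : ℝ => ∫ s in (-1:ℝ)..1, Real.exp (-2*t*(1+s)) * (1-s) ^ ((k:ℝ)+α)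
            * (1+s) ^ ((k:ℝ)+β)) t) ^ 2) ^ ((1:ℝ)/2) ≤ (Dl + Ds) * Ssm ^ ((1:ℝ)/2) := by
        rcases le_or_gt 0 ((k:ℝ)+α) with hw0 | hw0
        · -- use large inner bound
          have hIle : ∀ t ∈ Ioi (0:ℝ), (fun t : ℝ => ∫ s in (-1:ℝ)..1,
              Real.exp (-2*t*(1+s)) * (1-s) ^ ((k:ℝ)+α) * (1+s) ^ ((k:ℝ)+β)) t ≤
              Dl * (2*t + ((k:ℝ)+α+1)/2) ^ (-((k:ℝ)+β+1)) := by
            intro t ht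
            have ht0 : (0:ℝ) < t := ht
            have hcomp := aux_inner_large t ((k:ℝ)+α) ((k:ℝ)+β) ht0.le hw0 hx1
            show (∫ s in (-1:ℝ)..1, Real.exp (-2*t*(1+s)) * (1-s) ^ ((k:ℝ)+α)
              * (1+s) ^ ((k:ℝ)+β)) ≤ _
            rw [aux_inner_eq t ((k:ℝ)+α) ((k:ℝ)+β), hDl]
            exact hcomp
          have main := aux_outer (2*(k:ℝ)+2*a) d (((k:ℝ)+α+1)/2) Dl Ssm ((k:ℝ)+β+1)
            (fun t : ℝ => ∫ s in (-1:ℝ)..1,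
              Real.exp (-2*t*(1+s)) * (1-s) ^ ((k:ℝ)+α) * (1+s) ^ ((k:ℝ)+β))
            hmpd hc0 hDl0 hI0 hIle hint (by rw [hSsm]; exact hS)
          refine le_trans main ?_
          refine mul_le_mul_of_nonneg_right ?_ (Real.rpow_nonneg hSsm0 _)
          linarith
        · -- use small inner bound
          have hIle : ∀ t ∈ Ioi (0:ℝ), (fun t : ℝ => ∫ s in (-1:ℝ)..1,
              Real.exp (-2*t*(1+s)) * (1-s) ^ ((k:ℝ)+α) * (1+s) ^ ((k:ℝ)+β)) t ≤
              Ds * (2*t + ((k:ℝ)+α+1)/2) ^ (-((k:ℝ)+β+1)) := by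
            intro t ht
            have ht0 : (0:ℝ) < t := ht
            have hcomp := aux_inner_small t ((k:ℝ)+α) ((k:ℝ)+β) ht0.le hw1 hw0.le hx1
            show (∫ s in (-1:ℝ)..1, Real.exp (-2*t*(1+s)) * (1-s) ^ ((k:ℝ)+α)
              * (1+s) ^ ((k:ℝ)+β)) ≤ _
            rw [aux_inner_eq t ((k:ℝ)+α) ((k:ℝ)+β), hDs]
            exact hcomp
          have main := aux_outer (2*(k:ℝ)+2*a) d (((k:ℝ)+α+1)/2) Ds Ssm ((k:ℝ)+β+1)
            (fun t : ℝ => ∫ s in (-1:ℝ)..1,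
              Real.exp (-2*t*(1+s)) * (1-s) ^ ((k:ℝ)+α) * (1+s) ^ ((k:ℝ)+β))
            hmpd hc0 hDs0 hI0 hIle hint (by rw [hSsm]; exact hS)
          refine le_trans main ?_
          refine mul_le_mul_of_nonneg_right ?_ (Real.rpow_nonneg hSsm0 _)
          linarith
      have hEk : (Dl + Ds) * Ssm ^ ((1:ℝ)/2) = E k := by
        rw [hE, hDl, hDs, hSsm]
      refine le_trans hLDS ?_
      rw [hEk]
      -- E k ≤ C * Γ(k+1) * (k+1)^(-(β-2a+2))
      have hq : ((k:ℝ)+1) ^ (β-2*a+2) * ((k:ℝ)+1) ^ (-(β-2*a+2)) = 1 := by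
        rw [← Real.rpow_add hB0, show (β-2*a+2) + -(β-2*a+2) = 0 by ring, Real.rpow_zero]
      have hTk : |E k| * ((k:ℝ)+1) ^ (β-2*a+2) / Real.Gamma ((k:ℝ)+1) ≤ C := by
        rw [hC]
        have hterm := Finset.single_le_sum
          (f := fun j => |E j| * ((j:ℝ)+1) ^ (β-2*a+2) / Real.Gamma ((j:ℝ)+1))
          (fun j _ => by
            have hΓ : 0 < Real.Gamma ((j:ℝ)+1) := Real.Gamma_pos_of_pos (by positivity)
            have hr : (0:ℝ) ≤ ((j:ℝ)+1) ^ (β-2*a+2) := Real.rpow_nonneg (by positivity) _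
            positivity)
          (Finset.mem_range.mpr hkK)
        have habs : (0:ℝ) ≤ |Cmain| := abs_nonneg _
        linarith
      calc E k ≤ |E k| := le_abs_self _
        _ = (|E k| * ((k:ℝ)+1) ^ (β-2*a+2) / Real.Gamma ((k:ℝ)+1)) *
              (Real.Gamma ((k:ℝ)+1) * ((k:ℝ)+1) ^ (-(β-2*a+2))) := by
            rw [show (|E k| * ((k:ℝ)+1) ^ (β-2*a+2) / Real.Gamma ((k:ℝ)+1)) *
              (Real.Gamma ((k:ℝ)+1) * ((k:ℝ)+1) ^ (-(β-2*a+2)))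
              = |E k| * (((k:ℝ)+1) ^ (β-2*a+2) * ((k:ℝ)+1) ^ (-(β-2*a+2))) *
                (Real.Gamma ((k:ℝ)+1) / Real.Gamma ((k:ℝ)+1)) by ring]
            rw [hq, div_self hΓk1.ne', mul_one, mul_one]
        _ ≤ C * (Real.Gamma ((k:ℝ)+1) * ((k:ℝ)+1) ^ (-(β-2*a+2))) := by
            refine mul_le_mul_of_nonneg_right hTk ?_
            have := Real.rpow_nonneg hB0.le (-(β-2*a+2))
            positivity
        _ = C * Real.Gamma ((k:ℝ)+1) * ((k:ℝ)+1) ^ (-(β-2*a+2)) := by ring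
end
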